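/- arXiv:1812.05019 — 4 statements merged into one kernel-verified Lean document; each statement's English description precedes it below -/
import Mathlib

section
/- Let 0 < a ≤ b. For every R ≥ 2b, ∫_ℝ (1/R)·φ_{a,R}(y)·φ_{b,R}(y) dy = 2ab − R^{−1}·( (1/2)·a·b² + (1/6)·a³ ). -/
open MeasureTheory Real intervalIntegral

/-- `φ_{a,R}(y) = (1/2) ∫_{-R}^R 1_{|x-y|≤a} dx`. -/
noncomputable def phi (a R y : ℝ) : ℝ :=
  (1/2) * ∫ x in (-R)..R, if |x - y| ≤ a then (1:ℝ) else 0

lemma phi_eq (a R y : ℝ) (hR : 0 ≤ R) :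
    phi a R y = (1/2) * max (min R (y + a) - max (-R) (y - a)) 0 := by
  unfold phi
  congr 1
  rw [intervalIntegral.integral_of_le (by linarith : -R ≤ R)]
  have h0 : volume ({y - a} : Set ℝ) = 0 := measure_singleton _
  have hae : (fun x => if |x - y| ≤ a then (1:ℝ) else 0)
      =ᵐ[volume] (Set.Ioc (y - a) (y + a)).indicator 1 := by
    filter_upwards [measure_eq_zero_iff_ae_notMem.mp h0] with x hx
    simp only [Set.mem_singleton_iff] at hx
    have hx' : ¬ (y - a = x) := fun h => hx h.symm
    by_cases h : x ∈ Set.Ioc (y - a) (y + a)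
    · rw [Set.indicator_of_mem h]
      obtain ⟨h1, h2⟩ := h
      rw [if_pos (abs_le.mpr ⟨by linarith, by linarith⟩)]
      rfl
    · rw [Set.indicator_of_notMem h]
      rw [Set.mem_Ioc, not_and_or, not_lt, not_le] at h
      rw [if_neg]
      rw [abs_le, not_and_or, not_le, not_le]
      rcases h with h | h
      · left; rcases lt_or_eq_of_le h with h' | h'
        · linarith
        · exact absurd h'.symm hx'
      · right; linarith
  rw [integral_congr_ae (ae_restrict_of_ae hae)]
  rw [MeasureTheory.setIntegral_indicator measurableSet_Ioc]
  simp only [Pi.one_apply]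
  rw [MeasureTheory.setIntegral_const, Set.Ioc_inter_Ioc, Real.volume_real_Ioc]
  rw [smul_eq_mul, mul_one]



lemma integral_quad (c0 c1 c2 l u : ℝ) :
    ∫ y in l..u, (c0 + c1 * y + c2 * y ^ 2)
      = c0 * (u - l) + c1 * (u ^ 2 - l ^ 2) / 2 + c2 * (u ^ 3 - l ^ 3) / 3 := by
  have h1 : IntervalIntegrable (fun _ : ℝ => c0) volume l u := intervalIntegrable_const
  have h2 : IntervalIntegrable (fun y : ℝ => c1 * y) volume l u :=
    (continuous_const.mul continuous_id).intervalIntegrable _ _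
  have h3 : IntervalIntegrable (fun y : ℝ => c2 * y ^ 2) volume l u :=
    (continuous_const.mul (continuous_pow 2)).intervalIntegrable _ _
  rw [intervalIntegral.integral_add (h1.add h2) h3, intervalIntegral.integral_add h1 h2,
    intervalIntegral.integral_const, intervalIntegral.integral_const_mul,
    intervalIntegral.integral_const_mul, integral_id, integral_pow]
  push_cast
  rw [smul_eq_mul]
  ring


set_option maxHeartbeats 1000000 in
lemma main_calc (a b R : ℝ) (ha : 0 < a) (hab : a ≤ b) (hR : 2 * b ≤ R) :
    ∫ y : ℝ, (1 / R) * ((1/2) * max (min R (y + a) - max (-R) (y - a)) 0)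
        * ((1/2) * max (min R (y + b) - max (-R) (y - b)) 0)
      = 2 * a * b - R⁻¹ * ((1/2) * a * b ^ 2 + (1/6) * a ^ 3) := by
  have hb : 0 < b := lt_of_lt_of_le ha hab
  have hR0 : 0 < R := by linarith
  set F : ℝ → ℝ := fun y => (1 / R) * ((1/2) * max (min R (y + a) - max (-R) (y - a)) 0)
        * ((1/2) * max (min R (y + b) - max (-R) (y - b)) 0) with hF
  have hcont : Continuous F := by
    apply Continuous.mul
    apply Continuous.mul continuous_const
    · exact continuous_const.mul (((continuous_const.min (continuous_id.add continuous_const)).sub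
        (continuous_const.max (continuous_id.sub continuous_const))).max continuous_const)
    · exact continuous_const.mul (((continuous_const.min (continuous_id.add continuous_const)).sub
        (continuous_const.max (continuous_id.sub continuous_const))).max continuous_const)
  have hsupp : ∀ y ∉ Set.Ioc (-(R+a)) (R+a), F y = 0 := by
    intro y hy
    rw [Set.mem_Ioc, not_and_or, not_lt, not_le] at hy
    suffices h : max (min R (y + a) - max (-R) (y - a)) 0 = 0 by
      simp only [hF, h]; ring
    rw [max_eq_right]
    have h1 := min_le_right R (y + a)
    have h2 := le_max_left (-R) (y - a)
    have h3 := min_le_left R (y + a)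
    have h4 := le_max_right (-R) (y - a)
    rcases hy with h | h
    · linarith
    · linarith
  have hstep : ∫ y : ℝ, F y = ∫ y in (-(R+a))..(R+a), F y := by
    rw [intervalIntegral.integral_of_le (by linarith), ← MeasureTheory.integral_indicator measurableSet_Ioc]
    congr 1
    funext y
    rw [Set.indicator_apply]
    split_ifs with h
    · rfl
    · exact hsupp y h
  rw [hstep]
  have hint : ∀ l u : ℝ, IntervalIntegrable F volume l u := fun l u =>
    hcont.intervalIntegrable l u
  rw [← integral_add_adjacent_intervals (hint (-(R+a)) (a-R)) (hint (a-R) (R+a)),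
      ← integral_add_adjacent_intervals (hint (a-R) (b-R)) (hint (b-R) (R+a)),
      ← integral_add_adjacent_intervals (hint (b-R) (R-b)) (hint (R-b) (R+a)),
      ← integral_add_adjacent_intervals (hint (R-b) (R-a)) (hint (R-a) (R+a))]
  have e1 : (∫ y in (-(R+a))..(a-R), F y)
      = ∫ y in (-(R+a))..(a-R), ((a+R)*(b+R)/(4*R) + ((a+b+2*R)/(4*R))*y + (1/(4*R))*y^2) := by
    apply intervalIntegral.integral_congr
    intro y hy
    rw [Set.uIcc_of_le (by linarith)] at hy
    obtain ⟨hy1, hy2⟩ := hy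
    simp only [hF]
    rw [min_eq_right (by linarith : y + a ≤ R), max_eq_left (by linarith : y - a ≤ -R),
        min_eq_right (by linarith : y + b ≤ R), max_eq_left (by linarith : y - b ≤ -R),
        max_eq_left (by linarith : (0:ℝ) ≤ y + a - -R),
        max_eq_left (by linarith : (0:ℝ) ≤ y + b - -R)]
    field_simp <;> ring
  have e2 : (∫ y in (a-R)..(b-R), F y)
      = ∫ y in (a-R)..(b-R), (a*(b+R)/(2*R) + (a/(2*R))*y + 0*y^2) := by
    apply intervalIntegral.integral_congr
    intro y hy
    rw [Set.uIcc_of_le (by linarith)] at hy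
    obtain ⟨hy1, hy2⟩ := hy
    simp only [hF]
    rw [min_eq_right (by linarith : y + a ≤ R), max_eq_right (by linarith : -R ≤ y - a),
        min_eq_right (by linarith : y + b ≤ R), max_eq_left (by linarith : y - b ≤ -R),
        max_eq_left (by linarith : (0:ℝ) ≤ y + a - (y - a)),
        max_eq_left (by linarith : (0:ℝ) ≤ y + b - -R)]
    field_simp <;> ring
  have e3 : (∫ y in (b-R)..(R-b), F y)
      = ∫ y in (b-R)..(R-b), (a*b/R + 0*y + 0*y^2) := by
    apply intervalIntegral.integral_congr
    intro y hy
    rw [Set.uIcc_of_le (by linarith)] at hy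
    obtain ⟨hy1, hy2⟩ := hy
    simp only [hF]
    rw [min_eq_right (by linarith : y + a ≤ R), max_eq_right (by linarith : -R ≤ y - a),
        min_eq_right (by linarith : y + b ≤ R), max_eq_right (by linarith : -R ≤ y - b),
        max_eq_left (by linarith : (0:ℝ) ≤ y + a - (y - a)),
        max_eq_left (by linarith : (0:ℝ) ≤ y + b - (y - b))]
    field_simp <;> ring
  have e4 : (∫ y in (R-b)..(R-a), F y)
      = ∫ y in (R-b)..(R-a), (a*(b+R)/(2*R) + (-(a/(2*R)))*y + 0*y^2) := by
    apply intervalIntegral.integral_congr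
    intro y hy
    rw [Set.uIcc_of_le (by linarith)] at hy
    obtain ⟨hy1, hy2⟩ := hy
    simp only [hF]
    rw [min_eq_right (by linarith : y + a ≤ R), max_eq_right (by linarith : -R ≤ y - a),
        min_eq_left (by linarith : R ≤ y + b), max_eq_right (by linarith : -R ≤ y - b),
        max_eq_left (by linarith : (0:ℝ) ≤ y + a - (y - a)),
        max_eq_left (by linarith : (0:ℝ) ≤ R - (y - b))]
    field_simp <;> ring
  have e5 : (∫ y in (R-a)..(R+a), F y)
      = ∫ y in (R-a)..(R+a), ((R+a)*(R+b)/(4*R) + (-((2*R+a+b)/(4*R)))*y + (1/(4*R))*y^2) := by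
    apply intervalIntegral.integral_congr
    intro y hy
    rw [Set.uIcc_of_le (by linarith)] at hy
    obtain ⟨hy1, hy2⟩ := hy
    simp only [hF]
    rw [min_eq_left (by linarith : R ≤ y + a), max_eq_right (by linarith : -R ≤ y - a),
        min_eq_left (by linarith : R ≤ y + b), max_eq_right (by linarith : -R ≤ y - b),
        max_eq_left (by linarith : (0:ℝ) ≤ R - (y - a)),
        max_eq_left (by linarith : (0:ℝ) ≤ R - (y - b))]
    field_simp <;> ring
  rw [e1, e2, e3, e4, e5]
  simp only [integral_quad]
  field_simp
  ring


/-- Lemma 3.1: for `0 < a ≤ b` and `R ≥ 2b`,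
`∫_ℝ (1/R) φ_{a,R}(y) φ_{b,R}(y) dy = 2ab - R⁻¹ ((1/2) a b² + (1/6) a³)`. -/
theorem stmt_3 (a b : ℝ) (ha : 0 < a) (hab : a ≤ b) (R : ℝ) (hR : 2 * b ≤ R) :
    ∫ y : ℝ, (1 / R) * phi a R y * phi b R y
      = 2 * a * b - R⁻¹ * ((1/2) * a * b ^ 2 + (1/6) * a ^ 3) := by
  have hR0 : (0:ℝ) ≤ R := by linarith [lt_of_lt_of_le ha hab]
  have h : ∀ y : ℝ, (1 / R) * phi a R y * phi b R y
      = (1 / R) * ((1/2) * max (min R (y + a) - max (-R) (y - a)) 0)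
        * ((1/2) * max (min R (y + b) - max (-R) (y - b)) 0) := fun y => by
    rw [phi_eq a R y hR0, phi_eq b R y hR0]
  simp only [h]
  exact main_calc a b R ha hab hR
end

section
/- Let 0 < a ≤ b. Then lim_{R→∞} ∫_ℝ (1/R)·φ_{a,R}(y)·φ_{b,R}(y) dy = 2ab. -/
open MeasureTheory Real intervalIntegral Filter Topology

lemma phiEq (a R y : ℝ) (hR : 0 ≤ R) :
    phi a R y = (1/2) * max (min R (y+a) - max (-R) (y-a)) 0 := by
  have h1 : ∀ x : ℝ, (if |x - y| ≤ a then (1:ℝ) else 0)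
      = (Set.Icc (y-a) (y+a)).indicator (fun _ => (1:ℝ)) x := by
    intro x
    rw [Set.indicator_apply]
    congr 1
    simp only [abs_le, Set.mem_Icc, eq_iff_iff]
    constructor <;> (intro h; constructor <;> linarith [h.1, h.2])
  unfold phi
  simp_rw [h1]
  rw [intervalIntegral.integral_of_le (by linarith),
    MeasureTheory.setIntegral_indicator measurableSet_Icc,
    MeasureTheory.setIntegral_const]
  have hae : (Set.Icc (y-a) (y+a) ∩ Set.Ioc (-R) R : Set ℝ)
      =ᵐ[volume] (Set.Ioc (max (-R) (y-a)) (min R (y+a)) : Set ℝ) := by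
    have h2 : (Set.Icc (y-a) (y+a) : Set ℝ) =ᵐ[volume] (Set.Ioc (y-a) (y+a) : Set ℝ) :=
      (MeasureTheory.Ioc_ae_eq_Icc (α := ℝ) (μ := volume)).symm
    have h3 : (Set.Ioc (y-a) (y+a) ∩ Set.Ioc (-R) R : Set ℝ)
        = (Set.Ioc (max (-R) (y-a)) (min R (y+a)) : Set ℝ) := by
          rw [Set.Ioc_inter_Ioc, max_comm, min_comm]
    exact h3 ▸ h2.inter (Filter.EventuallyEq.refl _ _)
  rw [Set.inter_comm, measureReal_def, measure_congr hae, Real.volume_Ioc, smul_eq_mul, mul_one,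
    ENNReal.toReal_ofReal']

lemma phi_nonneg (a R y : ℝ) (hR : 0 ≤ R) : 0 ≤ phi a R y := by
  rw [phiEq _ _ _ hR]
  have := le_max_right (min R (y+a) - max (-R) (y-a)) 0
  linarith

lemma phi_le (a R y : ℝ) (ha : 0 ≤ a) (hR : 0 ≤ R) : phi a R y ≤ a := by
  rw [phiEq _ _ _ hR]
  have h1 : min R (y+a) ≤ y + a := min_le_right _ _
  have h2 : y - a ≤ max (-R) (y-a) := le_max_right _ _
  have h3 : max (min R (y+a) - max (-R) (y-a)) 0 ≤ 2*a := max_le (by linarith) (by linarith)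
  linarith

lemma phi_eq_of_abs_le (a R y : ℝ) (ha : 0 ≤ a) (hy : |y| ≤ R - a) : phi a R y = a := by
  rw [abs_le] at hy
  have hR : 0 ≤ R := by linarith [hy.1, hy.2]
  rw [phiEq _ _ _ hR, max_eq_right (show -R ≤ y - a by linarith [hy.1]),
    min_eq_right (by linarith [hy.2]), max_eq_left (by linarith)]
  ring

lemma phi_eq_zero (a R y : ℝ) (ha : 0 ≤ a) (hR : 0 ≤ R) (hy : R + a ≤ |y|) : phi a R y = 0 := by
  rw [phiEq _ _ _ hR]
  have h : min R (y+a) - max (-R) (y-a) ≤ 0 := by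
    rcases le_abs.mp hy with h | h
    · have h1 : min R (y+a) ≤ R := min_le_left _ _
      have h2 : y - a ≤ max (-R) (y-a) := le_max_right _ _
      linarith
    · have h1 : min R (y+a) ≤ y + a := min_le_right _ _
      have h2 : -R ≤ max (-R) (y-a) := le_max_left _ _
      linarith
  rw [max_eq_right h, mul_zero]

lemma phi_continuous (a R : ℝ) (hR : 0 ≤ R) : Continuous (fun y => phi a R y) := by
  have : (fun y => phi a R y) = fun y => (1/2) * max (min R (y+a) - max (-R) (y-a)) 0 := by
    funext y; exact phiEq a R y hR
  rw [this]
  exact continuous_const.mul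
    (((continuous_const.min (continuous_id.add continuous_const)).sub
      (continuous_const.max (continuous_id.sub continuous_const))).max continuous_const)

lemma limAux (c d : ℝ) : Tendsto (fun R : ℝ => 1/R * (2*(R+c)) * d) atTop (𝓝 (2*d)) := by
  have h : (fun R : ℝ => 1/R * (2*(R+c)) * d) =ᶠ[atTop] fun R => (2 + 2*c*R⁻¹) * d := by
    filter_upwards [eventually_gt_atTop (0:ℝ)] with R hR
    have hR' : R ≠ 0 := ne_of_gt hR
    field_simp
    try ring
    try tauto
  rw [Filter.tendsto_congr' h]
  have h2 : Tendsto (fun R : ℝ => (2 + 2*c*R⁻¹) * d) atTop (𝓝 ((2 + 2*c*0) * d)) :=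
    (tendsto_const_nhds.add (tendsto_const_nhds.mul tendsto_inv_atTop_zero)).mul tendsto_const_nhds
  simpa using h2

/-- Lemma 3.1 (limit): for `0 < a ≤ b`,
`lim_{R→∞} ∫_ℝ (1/R) φ_{a,R}(y) φ_{b,R}(y) dy = 2ab`. -/
theorem stmt_4 (a b : ℝ) (ha : 0 < a) (hab : a ≤ b) :
    Tendsto (fun R : ℝ => ∫ y : ℝ, (1 / R) * phi a R y * phi b R y)
      atTop (𝓝 (2 * a * b)) := by
  have hb : 0 < b := lt_of_lt_of_le ha hab
  rw [mul_assoc]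
  apply tendsto_of_tendsto_of_tendsto_of_le_of_le' (limAux (-b) (a*b)) (limAux a (a*b))
  all_goals
    filter_upwards [eventually_ge_atTop (a + b)] with R hR
  all_goals
    have hR0 : 0 < R := by linarith
    set f : ℝ → ℝ := fun y => 1 / R * phi a R y * phi b R y with hf
    have hfc : Continuous f := by
      exact (continuous_const.mul (phi_continuous a R hR0.le)).mul (phi_continuous b R hR0.le)
    have hfcs : HasCompactSupport f := by
      apply HasCompactSupport.intro (isCompact_Icc (a := -(R+b)) (b := R+b))
      intro y hy
      have hy' : R + b ≤ |y| := by
        rw [Set.mem_Icc, not_and_or, not_le, not_le] at hy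
        rcases hy with h | h
        · rw [abs_of_neg (by linarith)]; linarith
        · rw [abs_of_pos (by linarith)]; linarith
      have : phi b R y = 0 := phi_eq_zero b R y hb.le hR0.le hy'
      simp [hf, this]
    have hfi : Integrable f := hfc.integrable_of_hasCompactSupport hfcs
    have hfnn : ∀ y, 0 ≤ f y := fun y => by
      have h1 := phi_nonneg a R y hR0.le
      have h2 := phi_nonneg b R y hR0.le
      have : (0:ℝ) ≤ 1/R := by positivity
      positivity
  · -- lower bound
    calc 1/R * (2*(R + -b)) * (a*b)
        = ∫ y in Set.Icc (-(R-b)) (R-b), (fun _ : ℝ => 1/R*a*b) y := by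
          rw [MeasureTheory.setIntegral_const, measureReal_def, Real.volume_Icc, smul_eq_mul,
            ENNReal.toReal_ofReal (by linarith)]
          ring
      _ = ∫ y in Set.Icc (-(R-b)) (R-b), f y := by
          apply setIntegral_congr_fun measurableSet_Icc
          intro y hy
          rw [Set.mem_Icc] at hy
          have hya : |y| ≤ R - a := by rw [abs_le]; constructor <;> linarith [hy.1, hy.2]
          have hyb : |y| ≤ R - b := by rw [abs_le]; constructor <;> linarith [hy.1, hy.2]
          simp only [hf, phi_eq_of_abs_le a R y ha.le hya, phi_eq_of_abs_le b R y hb.le hyb]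
      _ ≤ ∫ y, f y := setIntegral_le_integral hfi (Filter.Eventually.of_forall hfnn)
  · -- upper bound
    calc ∫ y, f y
        = ∫ y in Set.Icc (-(R+a)) (R+a), f y := by
          refine (setIntegral_eq_integral_of_forall_compl_eq_zero (fun y hy => ?_)).symm
          have hy' : R + a ≤ |y| := by
            rw [Set.mem_Icc, not_and_or, not_le, not_le] at hy
            rcases hy with h | h
            · rw [abs_of_neg (by linarith)]; linarith
            · rw [abs_of_pos (by linarith)]; linarith
          have : phi a R y = 0 := phi_eq_zero a R y ha.le hR0.le hy'
          simp [hf, this]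
      _ ≤ ∫ y in Set.Icc (-(R+a)) (R+a), (fun _ : ℝ => 1/R*a*b) y := by
          apply setIntegral_mono_on hfi.integrableOn (integrableOn_const (by simp))
            measurableSet_Icc
          intro y _
          have h1 := phi_nonneg a R y hR0.le
          have h2 := phi_nonneg b R y hR0.le
          have h3 := phi_le a R y ha.le hR0.le
          have h4 := phi_le b R y hb.le hR0.le
          have h5 : phi a R y * phi b R y ≤ a * b := mul_le_mul h3 h4 h2 ha.le
          have h6 : (0:ℝ) < 1/R := by positivity
          calc f y = 1/R * (phi a R y * phi b R y) := by rw [hf]; ring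
            _ ≤ 1/R * (a*b) := by nlinarith
            _ = 1/R*a*b := by ring
      _ = 1/R * (2*(R + a)) * (a*b) := by
          rw [MeasureTheory.setIntegral_const, measureReal_def, Real.volume_Icc, smul_eq_mul,
            ENNReal.toReal_ofReal (by linarith)]
          ring
end

section
/- Let F be an integrable real-valued random variable on a probability space and let Z be a standard normal random variable. Then d_TV(F, Z) ≤ sup_f |E[f'(F)] − E[F·f(F)]|, where the supremum is taken over all continuously differentiable functions f : ℝ → ℝ such that ‖f‖_∞ ≤ √(π/2) and ‖f'‖_∞ ≤ 2. -/
open MeasureTheory ProbabilityTheory Real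

open Set Filter
open scoped ENNReal NNReal

noncomputable def steinPhi (t : ℝ) : ℝ := Real.exp (-(t ^ 2) / 2)

lemma steinPhi_pos (t : ℝ) : 0 < steinPhi t := Real.exp_pos _

lemma steinPhi_cont : Continuous steinPhi := by
  unfold steinPhi; continuity

lemma steinPhi_eq (t : ℝ) : steinPhi t = Real.exp (-(1/2 : ℝ) * t ^ 2) := by
  unfold steinPhi; ring_nf

lemma steinPhi_integrable : Integrable steinPhi := by
  have := integrable_exp_neg_mul_sq (by norm_num : (0:ℝ) < 1/2)
  convert this using 2 with t
  · exact steinPhi_eq t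

lemma steinPhi_integral : ∫ t, steinPhi t = Real.sqrt (2 * π) := by
  have := integral_gaussian (1/2 : ℝ)
  simp_rw [← steinPhi_eq] at this
  rw [this]
  rw [div_div_eq_mul_div, div_one, mul_comm]

lemma steinPhi_even (t : ℝ) : steinPhi (-t) = steinPhi t := by
  unfold steinPhi; ring_nf

lemma steinPhi_Iic_eq_Ioi (x : ℝ) :
    ∫ t in Iic x, steinPhi t = ∫ t in Ioi (-x), steinPhi t := by
  calc ∫ t in Iic x, steinPhi t = ∫ t in Iic x, steinPhi (-t) := by simp_rw [steinPhi_even]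
    _ = _ := integral_comp_neg_Iic x steinPhi

lemma steinPhi_integral_Ioi_zero : ∫ t in Ioi (0:ℝ), steinPhi t = Real.sqrt (π / 2) := by
  have hsplit : (∫ t in Iic (0:ℝ), steinPhi t) + ∫ t in Ioi (0:ℝ), steinPhi t
      = ∫ t, steinPhi t :=
    intervalIntegral.integral_Iic_add_Ioi steinPhi_integrable.integrableOn steinPhi_integrable.integrableOn
  have heq : ∫ t in Iic (0:ℝ), steinPhi t = ∫ t in Ioi (0:ℝ), steinPhi t := by
    simpa using steinPhi_Iic_eq_Ioi 0
  rw [heq, steinPhi_integral] at hsplit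
  have h2 : Real.sqrt (2 * π) = 2 * Real.sqrt (π / 2) := by
    rw [show (2:ℝ) * π = 2^2 * (π / 2) by ring, Real.sqrt_mul (by positivity),
      Real.sqrt_sq (by norm_num)]
  nlinarith [hsplit]

lemma steinPhi_hasDerivAt (t : ℝ) : HasDerivAt steinPhi (-t * steinPhi t) t := by
  have h1 : HasDerivAt (fun t : ℝ => -(t ^ 2) / 2) (-t) t := by
    have := ((hasDerivAt_pow 2 t).neg.div_const 2)
    simpa using this.congr_deriv (by ring)
  unfold steinPhi; simpa [mul_comm] using h1.exp

lemma steinPhi_tendsto_zero : Tendsto steinPhi atTop (nhds 0) := by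
  have h1 : Tendsto (fun t : ℝ => -(t ^ 2) / 2) atTop atBot := by
    apply Filter.Tendsto.atBot_div_const (by norm_num : (0:ℝ) < 2)
    exact tendsto_neg_atBot_iff.mpr (tendsto_pow_atTop two_ne_zero)
  exact Real.tendsto_exp_atBot.comp h1

lemma steinPhi_mul_integral (x : ℝ) : ∫ t in Ioi x, t * steinPhi t = steinPhi x := by
  have hint : Integrable (fun t : ℝ => t * steinPhi t) := by
    have := integrable_mul_exp_neg_mul_sq (by norm_num : (0:ℝ) < 1/2)
    convert this using 2 with t
    rw [steinPhi_eq]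
  have := integral_Ioi_of_hasDerivAt_of_tendsto
    (f := fun t => -steinPhi t) (f' := fun t => t * steinPhi t) (a := x)
    (((steinPhi_cont.neg).continuousWithinAt))
    (fun y _ => by exact (steinPhi_hasDerivAt y).neg.congr_deriv (by ring))
    hint.integrableOn
    (by simpa using steinPhi_tendsto_zero.neg)
  simpa using this

lemma steinPhi_mills (x : ℝ) :
    x * ∫ t in Ioi x, steinPhi t ≤ steinPhi x := by
  rw [← steinPhi_mul_integral x, ← integral_const_mul]
  refine setIntegral_mono_on
    (steinPhi_integrable.integrableOn.const_mul x)
    ?_ measurableSet_Ioi ?_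
  · have hint : Integrable (fun t : ℝ => t * steinPhi t) := by
      have := integrable_mul_exp_neg_mul_sq (by norm_num : (0:ℝ) < 1/2)
      convert this using 2 with t
      rw [steinPhi_eq]
    exact hint.integrableOn
  · intro t ht
    have : x ≤ t := le_of_lt ht
    nlinarith [steinPhi_pos t]

lemma steinPhi_shift_integral (x : ℝ) :
    ∫ t in Ioi x, steinPhi (t - x) = Real.sqrt (π / 2) := by
  rw [← steinPhi_integral_Ioi_zero, ← integral_indicator measurableSet_Ioi,
    ← integral_indicator measurableSet_Ioi]
  rw [← integral_sub_right_eq_self (fun t => (Ioi (0:ℝ)).indicator steinPhi t) x]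
  congr 1 with t
  by_cases ht : x < t
  · rw [indicator_of_mem (by exact ht) , indicator_of_mem (by simpa [sub_pos] using ht)]
  · rw [indicator_of_notMem (by exact ht), indicator_of_notMem (by simpa [sub_pos] using ht)]

lemma steinPhi_tail_bound {x : ℝ} (hx : 0 ≤ x) :
    ∫ t in Ioi x, steinPhi t ≤ steinPhi x * Real.sqrt (π / 2) := by
  have key : ∀ t ∈ Ioi x, steinPhi t ≤ steinPhi x * steinPhi (t - x) := by
    intro t ht
    have hxt : x ≤ t := le_of_lt ht
    unfold steinPhi
    rw [← Real.exp_add]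
    apply Real.exp_le_exp.mpr
    nlinarith [mul_nonneg hx (sub_nonneg.mpr hxt)]
  calc ∫ t in Ioi x, steinPhi t
      ≤ ∫ t in Ioi x, steinPhi x * steinPhi (t - x) :=
        setIntegral_mono_on steinPhi_integrable.integrableOn
          (((steinPhi_integrable.comp_sub_right x).const_mul _).integrableOn)
          measurableSet_Ioi key
    _ = steinPhi x * ∫ t in Ioi x, steinPhi (t - x) := by rw [integral_const_mul]
    _ = steinPhi x * Real.sqrt (π / 2) := by rw [steinPhi_shift_integral]

noncomputable def steinG (g : ℝ → ℝ) (x : ℝ) : ℝ := ∫ t in Iic x, g t * steinPhi t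

noncomputable def steinF (g : ℝ → ℝ) (x : ℝ) : ℝ := Real.exp (x ^ 2 / 2) * steinG g x

lemma exp_mul_steinPhi (x : ℝ) : Real.exp (x ^ 2 / 2) * steinPhi x = 1 := by
  rw [steinPhi, ← Real.exp_add, show x ^ 2 / 2 + -x ^ 2 / 2 = 0 by ring, Real.exp_zero]

section SteinSolution

variable {g : ℝ → ℝ} (hc : Continuous g) (hb : ∀ t, |g t| ≤ 1)
  (h0 : ∫ t, g t * steinPhi t = 0)

include hc hb in
lemma stein_integrable : Integrable (fun t => g t * steinPhi t) := by
  refine steinPhi_integrable.mono' ((hc.mul steinPhi_cont).aestronglyMeasurable)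
    (Eventually.of_forall fun t => ?_)
  rw [Real.norm_eq_abs, abs_mul, abs_of_pos (steinPhi_pos t)]
  nlinarith [hb t, steinPhi_pos t, abs_nonneg (g t)]

include hc hb in
lemma steinG_abs_le_Iic (x : ℝ) : |steinG g x| ≤ ∫ t in Iic x, steinPhi t := by
  rw [← Real.norm_eq_abs]
  refine (norm_integral_le_integral_norm _).trans ?_
  refine setIntegral_mono_on ((stein_integrable hc hb).norm.integrableOn)
    steinPhi_integrable.integrableOn measurableSet_Iic fun t _ => ?_
  rw [Real.norm_eq_abs, abs_mul, abs_of_pos (steinPhi_pos t)]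
  nlinarith [hb t, steinPhi_pos t, abs_nonneg (g t)]

include hc hb h0 in
lemma steinG_abs_le_Ioi (x : ℝ) : |steinG g x| ≤ ∫ t in Ioi x, steinPhi t := by
  have hsplit := intervalIntegral.integral_Iic_add_Ioi (b := x) (μ := volume)
    (stein_integrable hc hb).integrableOn (stein_integrable hc hb).integrableOn
  rw [h0] at hsplit
  have hG : steinG g x = -∫ t in Ioi x, g t * steinPhi t := by
    unfold steinG; linarith
  rw [hG, abs_neg]
  rw [← Real.norm_eq_abs]
  refine (norm_integral_le_integral_norm _).trans ?_
  refine setIntegral_mono_on ((stein_integrable hc hb).norm.integrableOn)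
    steinPhi_integrable.integrableOn measurableSet_Ioi fun t _ => ?_
  rw [Real.norm_eq_abs, abs_mul, abs_of_pos (steinPhi_pos t)]
  nlinarith [hb t, steinPhi_pos t, abs_nonneg (g t)]

include hc hb h0 in
lemma steinG_abs_le_phi (x : ℝ) : |steinG g x| ≤ steinPhi x * Real.sqrt (π / 2) := by
  rcases le_total 0 x with hx | hx
  · exact (steinG_abs_le_Ioi hc hb h0 x).trans (steinPhi_tail_bound hx)
  · refine (steinG_abs_le_Iic hc hb x).trans ?_
    rw [steinPhi_Iic_eq_Ioi, ← steinPhi_even x]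
    exact steinPhi_tail_bound (by linarith)

include hc hb h0 in
lemma steinG_abs_mul_le_phi (x : ℝ) : |x| * |steinG g x| ≤ steinPhi x := by
  rcases le_total 0 x with hx | hx
  · rw [abs_of_nonneg hx]
    calc x * |steinG g x| ≤ x * ∫ t in Ioi x, steinPhi t := by
          exact mul_le_mul_of_nonneg_left (steinG_abs_le_Ioi hc hb h0 x) hx
      _ ≤ steinPhi x := steinPhi_mills x
  · rw [abs_of_nonpos hx]
    calc -x * |steinG g x| ≤ -x * ∫ t in Iic x, steinPhi t := by
          exact mul_le_mul_of_nonneg_left (steinG_abs_le_Iic hc hb x) (by linarith)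
      _ = -x * ∫ t in Ioi (-x), steinPhi t := by rw [steinPhi_Iic_eq_Ioi]
      _ ≤ steinPhi (-x) := steinPhi_mills (-x)
      _ = steinPhi x := steinPhi_even x

include hc hb h0 in
lemma steinF_abs_le (x : ℝ) : |steinF g x| ≤ Real.sqrt (π / 2) := by
  have h := steinG_abs_le_phi hc hb h0 x
  have hexp : (0:ℝ) < Real.exp (x ^ 2 / 2) := Real.exp_pos _
  have := exp_mul_steinPhi x
  rw [steinF, abs_mul, abs_of_pos hexp]
  calc Real.exp (x ^ 2 / 2) * |steinG g x|
      ≤ Real.exp (x ^ 2 / 2) * (steinPhi x * Real.sqrt (π / 2)) :=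
        mul_le_mul_of_nonneg_left h (le_of_lt hexp)
    _ = Real.sqrt (π / 2) := by rw [← mul_assoc, this, one_mul]

include hc hb h0 in
lemma steinF_mul_abs_le (x : ℝ) : |x * steinF g x| ≤ 1 := by
  have h := steinG_abs_mul_le_phi hc hb h0 x
  have hexp : (0:ℝ) < Real.exp (x ^ 2 / 2) := Real.exp_pos _
  rw [steinF, show x * (Real.exp (x ^ 2 / 2) * steinG g x)
      = Real.exp (x ^ 2 / 2) * (x * steinG g x) by ring,
    abs_mul, abs_of_pos hexp, abs_mul]
  calc Real.exp (x ^ 2 / 2) * (|x| * |steinG g x|)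
      ≤ Real.exp (x ^ 2 / 2) * steinPhi x := mul_le_mul_of_nonneg_left h (le_of_lt hexp)
    _ = 1 := exp_mul_steinPhi x

include hc hb in
lemma steinG_hasDerivAt (x : ℝ) : HasDerivAt (steinG g) (g x * steinPhi x) x := by
  have hk : Continuous fun t => g t * steinPhi t := hc.mul steinPhi_cont
  have hki := stein_integrable hc hb
  have heq : ∀ u : ℝ, steinG g u = (∫ t in (0:ℝ)..u, g t * steinPhi t) + steinG g 0 := by
    intro u
    have := intervalIntegral.integral_Iic_sub_Iic (μ := volume) (a := (0:ℝ)) (b := u)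
      hki.integrableOn hki.integrableOn
    unfold steinG
    linarith
  have hd : HasDerivAt (fun u => (∫ t in (0:ℝ)..u, g t * steinPhi t) + steinG g 0)
      (g x * steinPhi x) x :=
    (intervalIntegral.integral_hasDerivAt_right (hk.intervalIntegrable _ _)
      (hk.stronglyMeasurableAtFilter _ _) hk.continuousAt).add_const _
  exact hd.congr_of_eventuallyEq (Eventually.of_forall heq)

include hc hb in
lemma steinF_hasDerivAt (x : ℝ) :
    HasDerivAt (steinF g) (x * steinF g x + g x) x := by
  have h1 : HasDerivAt (fun x : ℝ => x ^ 2 / 2) x x := by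
    simpa using ((hasDerivAt_pow 2 x).div_const 2).congr_deriv (by ring)
  have he : HasDerivAt (fun x : ℝ => Real.exp (x ^ 2 / 2)) (Real.exp (x ^ 2 / 2) * x) x := h1.exp
  have := he.mul (steinG_hasDerivAt hc hb x)
  refine (this.congr_deriv ?_)
  have h2 := exp_mul_steinPhi x
  unfold steinF
  linear_combination g x * h2

include hc hb in
lemma steinF_deriv : deriv (steinF g) = fun x => x * steinF g x + g x :=
  funext fun x => (steinF_hasDerivAt hc hb x).deriv

include hc hb in
lemma steinF_contDiff : ContDiff ℝ 1 (steinF g) := by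
  rw [contDiff_one_iff_deriv]
  have hdiff : Differentiable ℝ (steinF g) := fun x => (steinF_hasDerivAt hc hb x).differentiableAt
  refine ⟨hdiff, ?_⟩
  rw [steinF_deriv hc hb]
  exact (continuous_id.mul hdiff.continuous).add hc

include hc hb h0 in
lemma steinF_deriv_abs_le (x : ℝ) : |deriv (steinF g) x| ≤ 2 := by
  rw [steinF_deriv hc hb]
  calc |x * steinF g x + g x| ≤ |x * steinF g x| + |g x| := abs_add_le _ _
    _ ≤ 1 + 1 := add_le_add (steinF_mul_abs_le hc hb h0 x) (hb x)
    _ = 2 := by norm_num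

end SteinSolution

lemma gaussianPDFReal_eq_steinPhi (x : ℝ) :
    gaussianPDFReal 0 1 x = (Real.sqrt (2 * π))⁻¹ * steinPhi x := by
  simp [gaussianPDFReal, steinPhi]

lemma integral_gaussianReal_eq (u : ℝ → ℝ) :
    ∫ x, u x ∂(gaussianReal 0 1) = ∫ x, gaussianPDFReal 0 1 x * u x := by
  rw [gaussianReal_of_var_ne_zero 0 one_ne_zero]
  have hmeas : Measurable fun x => (gaussianPDFReal 0 1 x).toNNReal :=
    (measurable_gaussianPDFReal 0 1).real_toNNReal
  have hpdf : gaussianPDF 0 1 = fun x => ((gaussianPDFReal 0 1 x).toNNReal : ℝ≥0∞) := by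
    funext x
    simp [gaussianPDF, ENNReal.ofReal]
  rw [hpdf, integral_withDensity_eq_integral_smul hmeas]
  congr 1 with x
  simp [NNReal.smul_def, Real.coe_toNNReal _ (gaussianPDFReal_nonneg 0 1 x)]

lemma stein_center (hfun : ℝ → ℝ) (hcont : Continuous hfun)
    (hbd : ∀ x, hfun x ∈ Icc (0:ℝ) 1) :
    ∫ t, (hfun t - ∫ x, hfun x ∂(gaussianReal 0 1)) * steinPhi t = 0 := by
  set c := ∫ x, hfun x ∂(gaussianReal 0 1) with hc
  have hint : Integrable (fun t => hfun t * steinPhi t) := by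
    refine steinPhi_integrable.mono' ((hcont.mul steinPhi_cont).aestronglyMeasurable)
      (Eventually.of_forall fun t => ?_)
    rw [Real.norm_eq_abs, abs_mul, abs_of_pos (steinPhi_pos t), abs_of_nonneg (hbd t).1]
    nlinarith [(hbd t).2, steinPhi_pos t]
  have hs : Real.sqrt (2 * π) ≠ 0 := by positivity
  have hcval : c = (Real.sqrt (2 * π))⁻¹ * ∫ t, steinPhi t * hfun t := by
    rw [hc, integral_gaussianReal_eq]
    simp_rw [gaussianPDFReal_eq_steinPhi, mul_assoc]
    rw [integral_const_mul]
  have hkey : ∫ t, hfun t * steinPhi t = Real.sqrt (2 * π) * c := by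
    rw [hcval]
    simp_rw [mul_comm (hfun _) (steinPhi _)]
    field_simp
  simp_rw [sub_mul]
  rw [integral_sub hint (steinPhi_integrable.const_mul c), hkey, integral_const_mul,
    steinPhi_integral]
  ring

lemma meas_toReal_le {m : Measure ℝ} [IsFiniteMeasure m] {X Y : Set ℝ} (_hXY : X ⊆ Y)
    {δ : ℝ} (hδ : 0 ≤ δ) (h : m (Y \ X) ≤ ENNReal.ofReal δ) :
    (m Y).toReal ≤ (m X).toReal + δ := by
  have hsub : Y ⊆ X ∪ (Y \ X) := fun y hy => by
    by_cases hx : y ∈ X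
    · exact Or.inl hx
    · exact Or.inr ⟨hy, hx⟩
  have h1 : m Y ≤ m X + ENNReal.ofReal δ :=
    ((measure_mono hsub).trans (measure_union_le _ _)).trans (by gcongr)
  have h2 := ENNReal.toReal_mono (by finiteness) h1
  rwa [ENNReal.toReal_add (measure_ne_top _ _) ENNReal.ofReal_ne_top,
    ENNReal.toReal_ofReal hδ] at h2

lemma urysohn_integral_bounds (m : Measure ℝ) [IsProbabilityMeasure m] {K U : Set ℝ}
    (hK : MeasurableSet K) (hU : MeasurableSet U) {hfun : ℝ → ℝ} (hcont : Continuous hfun)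
    (hbd : ∀ x, hfun x ∈ Icc (0:ℝ) 1) (hfK : EqOn hfun 1 K) (hfU : EqOn hfun 0 Uᶜ) :
    (m K).toReal ≤ (∫ x, hfun x ∂m) ∧ (∫ x, hfun x ∂m) ≤ (m U).toReal := by
  have hint : Integrable hfun m := by
    refine (integrable_const (1:ℝ)).mono' hcont.aestronglyMeasurable
      (Eventually.of_forall fun x => ?_)
    rw [Real.norm_eq_abs, abs_of_nonneg (hbd x).1]
    exact (hbd x).2
  constructor
  · have hmono : ∀ x, K.indicator (fun _ => (1:ℝ)) x ≤ hfun x := by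
      intro x
      by_cases hx : x ∈ K
      · rw [indicator_of_mem hx]
        exact le_of_eq (hfK hx).symm
      · rw [indicator_of_notMem hx]
        exact (hbd x).1
    have := integral_mono ((integrable_const (1:ℝ)).indicator hK) hint hmono
    rwa [integral_indicator_const _ hK, smul_eq_mul, mul_one] at this
  · have hmono : ∀ x, hfun x ≤ U.indicator (fun _ => (1:ℝ)) x := by
      intro x
      by_cases hx : x ∈ U
      · rw [indicator_of_mem hx]
        exact (hbd x).2
      · rw [indicator_of_notMem hx]
        exact le_of_eq (hfU hx)
    have := integral_mono hint ((integrable_const (1:ℝ)).indicator hU) hmono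
    rwa [integral_indicator_const _ hU, smul_eq_mul, mul_one] at this

lemma stein_sup_bdd {Ω : Type*} [MeasureSpace Ω] [IsProbabilityMeasure (ℙ : Measure Ω)]
    (F : Ω → ℝ) (hF : Integrable F) :
    BddAbove (Set.range fun f : {f : ℝ → ℝ // ContDiff ℝ 1 f ∧
        (∀ x, |f x| ≤ Real.sqrt (π / 2)) ∧ (∀ x, |deriv f x| ≤ 2)} =>
      |(∫ ω, deriv f.1 (F ω)) - ∫ ω, F ω * f.1 (F ω)|) := by
  refine ⟨2 + Real.sqrt (π / 2) * ∫ ω, |F ω|, ?_⟩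
  rintro _ ⟨f, rfl⟩
  obtain ⟨hcd, hfb, hdb⟩ := f.2
  have h1 : |∫ ω, deriv f.1 (F ω)| ≤ 2 := by
    rw [← Real.norm_eq_abs]
    have := norm_integral_le_of_norm_le_const (μ := (ℙ : Measure Ω))
      (f := fun ω => deriv f.1 (F ω)) (C := 2)
      (Eventually.of_forall fun ω => by rw [Real.norm_eq_abs]; exact hdb (F ω))
    simpa using this
  have hm : AEStronglyMeasurable (fun ω => F ω * f.1 (F ω)) ℙ :=
    hF.aestronglyMeasurable.mul
      ((hcd.continuous.measurable.comp_aemeasurable hF.aemeasurable).aestronglyMeasurable)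
  have hptw : ∀ ω, ‖F ω * f.1 (F ω)‖ ≤ Real.sqrt (π / 2) * |F ω| := by
    intro ω
    rw [Real.norm_eq_abs, abs_mul]
    nlinarith [hfb (F ω), abs_nonneg (F ω), abs_nonneg (f.1 (F ω)),
      Real.sqrt_nonneg (π / 2)]
  have hint : Integrable (fun ω => F ω * f.1 (F ω)) := by
    refine ((hF.abs.const_mul (Real.sqrt (π / 2)))).mono' hm
      (Eventually.of_forall fun ω => hptw ω)
  have h2 : |∫ ω, F ω * f.1 (F ω)| ≤ Real.sqrt (π / 2) * ∫ ω, |F ω| := by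
    rw [← Real.norm_eq_abs]
    refine (norm_integral_le_integral_norm _).trans ?_
    rw [← integral_const_mul]
    exact integral_mono hint.norm (hF.abs.const_mul _) hptw
  calc |(∫ ω, deriv f.1 (F ω)) - ∫ ω, F ω * f.1 (F ω)|
      ≤ |∫ ω, deriv f.1 (F ω)| + |∫ ω, F ω * f.1 (F ω)| := abs_sub _ _
    _ ≤ 2 + Real.sqrt (π / 2) * ∫ ω, |F ω| := add_le_add h1 h2

/-- Theorem 2.3 (Stein's bound): for an integrable random variable `F` and a standard
normal `Z` (with law `gaussianReal 0 1`),
`d_TV(F, Z) ≤ sup { |E[f'(F)] - E[F f(F)]| : f ∈ C¹(ℝ), ‖f‖_∞ ≤ √(π/2), ‖f'‖_∞ ≤ 2 }`,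
where `d_TV` is the supremum over Borel sets `B` of `|P(F ∈ B) - P(Z ∈ B)|`. -/
theorem stmt_11 {Ω : Type*} [MeasureSpace Ω] [IsProbabilityMeasure (ℙ : Measure Ω)]
    (F : Ω → ℝ) (hF : Integrable F) :
    ∀ B : Set ℝ, MeasurableSet B →
      |(ℙ (F ⁻¹' B)).toReal - ((gaussianReal 0 1) B).toReal| ≤
        ⨆ f : {f : ℝ → ℝ // ContDiff ℝ 1 f ∧ (∀ x, |f x| ≤ Real.sqrt (π / 2)) ∧
            (∀ x, |deriv f x| ≤ 2)},
          |(∫ ω, deriv f.1 (F ω)) - ∫ ω, F ω * f.1 (F ω)| := by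
  intro B hB
  set ν : Measure ℝ := gaussianReal 0 1 with hν
  set μ : Measure ℝ := Measure.map F ℙ with hμ
  have hFae : AEMeasurable F ℙ := hF.aemeasurable
  have hμprob : IsProbabilityMeasure μ := Measure.isProbabilityMeasure_map hFae
  have hμB : ℙ (F ⁻¹' B) = μ B := (Measure.map_apply_of_aemeasurable hFae hB).symm
  rw [hμB]
  set S := ⨆ f : {f : ℝ → ℝ // ContDiff ℝ 1 f ∧ (∀ x, |f x| ≤ Real.sqrt (π / 2)) ∧
      (∀ x, |deriv f x| ≤ 2)},
    |(∫ ω, deriv f.1 (F ω)) - ∫ ω, F ω * f.1 (F ω)| with hS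
  refine le_of_forall_pos_le_add fun ε hε => ?_
  -- regularity
  set ρ : Measure ℝ := μ + ν with hρ
  have hρfin : IsFiniteMeasure ρ := by infer_instance
  have hε2 : (ENNReal.ofReal (ε / 2)) ≠ 0 := (ENNReal.ofReal_pos.mpr (by linarith)).ne'
  obtain ⟨K, hKB, hKcomp, hKlt⟩ := hB.exists_isCompact_diff_lt (measure_ne_top ρ B) hε2
  obtain ⟨U, hBU, hUopen, -, hUlt⟩ := hB.exists_isOpen_diff_lt (measure_ne_top ρ B) hε2
  have hμle : ∀ s, μ s ≤ ρ s := fun s => by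
    rw [hρ]; simp [Measure.add_apply]
  have hνle : ∀ s, ν s ≤ ρ s := fun s => by
    rw [hρ]; simp [Measure.add_apply]
  have hμ1 : (μ B).toReal ≤ (μ K).toReal + ε / 2 :=
    meas_toReal_le hKB (by linarith) ((hμle _).trans hKlt.le)
  have hμ2 : (μ U).toReal ≤ (μ B).toReal + ε / 2 :=
    meas_toReal_le hBU (by linarith) ((hμle _).trans hUlt.le)
  have hν1 : (ν B).toReal ≤ (ν K).toReal + ε / 2 :=
    meas_toReal_le hKB (by linarith) ((hνle _).trans hKlt.le)
  have hν2 : (ν U).toReal ≤ (ν B).toReal + ε / 2 :=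
    meas_toReal_le hBU (by linarith) ((hνle _).trans hUlt.le)
  -- Urysohn function
  have hdisj : Disjoint K Uᶜ := disjoint_compl_right_iff_subset.mpr (hKB.trans hBU)
  obtain ⟨hfun0, hfU, hfK, hbd0⟩ :=
    exists_continuous_zero_one_of_isCompact' hKcomp hUopen.isClosed_compl hdisj
  set hfun : ℝ → ℝ := ⇑hfun0 with hhfun
  have hcont : Continuous hfun := hfun0.continuous
  have hbd : ∀ x, hfun x ∈ Icc (0:ℝ) 1 := hbd0
  -- the centered function g
  set c : ℝ := ∫ x, hfun x ∂ν with hcdef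
  set a : ℝ := ∫ x, hfun x ∂μ with hadef
  obtain ⟨hμKa, haμU⟩ := urysohn_integral_bounds μ hKcomp.measurableSet hUopen.measurableSet
    hcont hbd hfK hfU
  obtain ⟨hνKc, hcνU⟩ := urysohn_integral_bounds ν hKcomp.measurableSet hUopen.measurableSet
    hcont hbd hfK hfU
  have hc0 : 0 ≤ c := le_trans ENNReal.toReal_nonneg hνKc
  have hc1 : c ≤ 1 := le_trans hcνU (by
    simpa using ENNReal.toReal_mono (by finiteness) (prob_le_one (μ := ν) (s := U)))
  set g : ℝ → ℝ := fun t => hfun t - c with hgdef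
  have gc : Continuous g := hcont.sub continuous_const
  have gb : ∀ t, |g t| ≤ 1 := fun t =>
    abs_le.mpr ⟨by have := (hbd t).1; simp only [hgdef]; linarith,
      by have := (hbd t).2; simp only [hgdef]; linarith⟩
  have g0 : ∫ t, g t * steinPhi t = 0 := stein_center hfun hcont hbd
  -- the Stein solution
  set f : ℝ → ℝ := steinF g with hfdef
  have hfcd : ContDiff ℝ 1 f := steinF_contDiff gc gb
  have hfb : ∀ x, |f x| ≤ Real.sqrt (π / 2) := fun x => steinF_abs_le gc gb g0 x
  have hfd : ∀ x, |deriv f x| ≤ 2 := fun x => steinF_deriv_abs_le gc gb g0 x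
  -- integrability of the three relevant functions
  have hFfae : AEStronglyMeasurable (fun ω => f (F ω)) ℙ :=
    (hfcd.continuous.measurable.comp_aemeasurable hFae).aestronglyMeasurable
  have hderivcont : Continuous (deriv f) := by
    rw [steinF_deriv gc gb]
    exact (continuous_id.mul (hfcd.continuous)).add gc
  have Int1 : Integrable (fun ω => deriv f (F ω)) := by
    refine (integrable_const (2:ℝ)).mono'
      ((hderivcont.measurable.comp_aemeasurable hFae).aestronglyMeasurable)
      (Eventually.of_forall fun ω => ?_)
    rw [Real.norm_eq_abs]
    exact hfd (F ω)
  have Int2 : Integrable (fun ω => F ω * f (F ω)) := by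
    refine ((hF.abs.const_mul (Real.sqrt (π / 2)))).mono' (hF.aestronglyMeasurable.mul hFfae)
      (Eventually.of_forall fun ω => ?_)
    rw [Real.norm_eq_abs, abs_mul]
    nlinarith [hfb (F ω), abs_nonneg (F ω), abs_nonneg (f (F ω)), Real.sqrt_nonneg (π / 2)]
  have Int3 : Integrable (fun ω => hfun (F ω)) := by
    refine (integrable_const (1:ℝ)).mono'
      ((hcont.measurable.comp_aemeasurable hFae).aestronglyMeasurable)
      (Eventually.of_forall fun ω => ?_)
    rw [Real.norm_eq_abs, abs_of_nonneg (hbd (F ω)).1]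
    exact (hbd (F ω)).2
  -- Stein identity
  have hkey : (∫ ω, deriv f (F ω)) - ∫ ω, F ω * f (F ω) = a - c := by
    have hptw : ∀ ω, deriv f (F ω) - F ω * f (F ω) = hfun (F ω) - c := by
      intro ω
      rw [hfdef, steinF_deriv gc gb]
      simp only [hgdef]
      ring
    rw [← integral_sub Int1 Int2]
    simp_rw [hptw]
    rw [integral_sub Int3 (integrable_const c), integral_const]
    simp only [probReal_univ, one_smul]
    congr 1
    rw [hadef, hμ, integral_map hFae hcont.aestronglyMeasurable]
  -- conclude
  have hD : |a - c| ≤ S := by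
    have := le_ciSup (stein_sup_bdd F hF) (⟨f, hfcd, hfb, hfd⟩ : {f : ℝ → ℝ // ContDiff ℝ 1 f ∧
      (∀ x, |f x| ≤ Real.sqrt (π / 2)) ∧ (∀ x, |deriv f x| ≤ 2)})
    rw [hS]
    calc |a - c| = |(∫ ω, deriv f (F ω)) - ∫ ω, F ω * f (F ω)| := by rw [hkey]
      _ ≤ _ := this
  have habs : |(μ B).toReal - (ν B).toReal| ≤ |a - c| + ε := by
    rw [abs_sub_le_iff]
    constructor
    · have h1 := le_abs_self (a - c)
      linarith
    · have h2 := neg_abs_le (a - c)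
      linarith
  linarith
end

section
/- Let H ∈ (1/2, 1) and t > 0. There exist constants C > 0 and R₀ > 0 (depending only on H and t) such that for all R ≥ R₀: ∫_{[−R,R]⁴} ∫_{ℝ⁶} 1_{{|x₁−z₁| ≤ t}}·1_{{|x₂−z₂| ≤ t}}·1_{{|x₃−y₃| ≤ t}}·1_{{|x₄−y₄| ≤ t}}·1_{{|y₁−z₁| ≤ t}}·1_{{|y₂−z₂| ≤ t}}·|y₁−y₃|^{2H−2}·|y₂−y₄|^{2H−2}·|z₁−z₂|^{2H−2} dy₁ dy₂ dy₃ dy₄ dz₁ dz₂ dx₁ dx₂ dx₃ dx₄ ≤ C·R^{6H−2}. -/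
open MeasureTheory Real intervalIntegral Set

namespace Stmt13

lemma abs_rpow_ii {r : ℝ} (h : -1 < r) (a b : ℝ) :
    IntervalIntegrable (fun x : ℝ => |x| ^ r) volume a b := by
  have h0 : ∀ c : ℝ, 0 ≤ c → IntervalIntegrable (fun x : ℝ => |x| ^ r) volume 0 c := by
    intro c hc
    have := intervalIntegrable_rpow' (a := 0) (b := c) h
    rw [intervalIntegrable_iff, uIoc_of_le hc] at this ⊢
    exact this.congr_fun (fun x hx => by rw [abs_of_pos hx.1]) measurableSet_Ioc
  have hall : ∀ c : ℝ, IntervalIntegrable (fun x : ℝ => |x| ^ r) volume 0 c := by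
    intro c
    rcases le_total 0 c with hc | hc
    · exact h0 c hc
    · rw [IntervalIntegrable.iff_comp_neg]
      simp only [abs_neg, neg_zero]
      exact h0 (-c) (by linarith)
  exact (hall a).symm.trans (hall b)

/-- primitive of the kernel -/
noncomputable def K (r x : ℝ) : ℝ := ∫ c in (0:ℝ)..x, |c| ^ r

/-- window integral of the kernel -/
noncomputable def Phi (r s u : ℝ) : ℝ := ∫ c in (u - s)..(u + s), |c| ^ r

lemma Phi_nonneg {r : ℝ} (s u : ℝ) (hs : 0 ≤ s) : 0 ≤ Phi r s u := by
  apply intervalIntegral.integral_nonneg (by linarith)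
  intro x _; positivity

lemma Phi_mono {r : ℝ} (hr : -1 < r) {s s' u v : ℝ} (hs : 0 ≤ s)
    (h1 : u - s' ≤ v - s) (h2 : v + s ≤ u + s') : Phi r s v ≤ Phi r s' u := by
  apply intervalIntegral.integral_mono_interval h1 (by linarith) h2
  · filter_upwards with x using by positivity
  · exact abs_rpow_ii hr _ _

lemma Phi_eq_K {r : ℝ} (hr : -1 < r) (s u : ℝ) :
    Phi r s u = K r (u + s) - K r (u - s) := by
  rw [K, K, Phi, ← intervalIntegral.integral_interval_sub_left (abs_rpow_ii hr _ _) (abs_rpow_ii hr _ _)]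

lemma K_mono {r : ℝ} (hr : -1 < r) : Monotone (K r) := by
  intro a b hab
  have h : K r b - K r a = ∫ x in a..b, |x| ^ r :=
    intervalIntegral.integral_interval_sub_left (abs_rpow_ii hr _ _) (abs_rpow_ii hr _ _)
  have h2 : 0 ≤ ∫ x in a..b, |x| ^ r :=
    intervalIntegral.integral_nonneg hab (fun x _ => by positivity)
  linarith

lemma K_continuous {r : ℝ} (hr : -1 < r) : Continuous (K r) :=
  intervalIntegral.continuous_primitive (fun _ _ => abs_rpow_ii hr _ _) 0

lemma Phi_continuous {r : ℝ} (hr : -1 < r) (s : ℝ) : Continuous (Phi r s) := by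
  have : Phi r s = fun u => K r (u + s) - K r (u - s) := funext (Phi_eq_K hr s)
  rw [this]
  exact ((K_continuous hr).comp (by continuity)).sub ((K_continuous hr).comp (by continuity))

lemma K_val {r : ℝ} (hr : -1 < r) {x : ℝ} (hx : 0 ≤ x) :
    K r x = x ^ (r + 1) / (r + 1) := by
  rw [K]
  have : (∫ c in (0:ℝ)..x, |c| ^ r) = ∫ c in (0:ℝ)..x, c ^ r := by
    apply intervalIntegral.integral_congr
    intro c hc
    rw [uIcc_of_le hx] at hc
    show |c| ^ r = c ^ r
    rw [abs_of_nonneg hc.1]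
  rw [this, integral_rpow (Or.inl hr)]
  rw [Real.zero_rpow (by linarith : r + 1 ≠ 0)]
  ring

lemma K_odd {r : ℝ} (x : ℝ) : K r (-x) = - K r x := by
  have h := intervalIntegral.integral_comp_neg (a := (0:ℝ)) (b := -x) (fun c => |c| ^ r)
  simp only [abs_neg, neg_neg, neg_zero] at h
  rw [K, K, h, intervalIntegral.integral_symm]

lemma ind_eq_indicator (x t : ℝ) :
    (fun z : ℝ => if |x - z| ≤ t then (1:ℝ) else 0) =
      (Icc (x - t) (x + t)).indicator (fun _ => (1:ℝ)) := by
  funext z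
  have : |x - z| ≤ t ↔ z ∈ Icc (x - t) (x + t) := by
    rw [abs_sub_comm, abs_le, mem_Icc]
    constructor <;> intro h <;> constructor <;> linarith [h.1, h.2]
  simp [Set.indicator, this]

lemma window_eval {r : ℝ} (hr : -1 < r) {t : ℝ} (ht : 0 ≤ t) (x y : ℝ) :
    ∫ z : ℝ, (if |x - z| ≤ t then (1:ℝ) else 0) * |y - z| ^ r = Phi r t (y - x) := by
  have h1 : (fun z : ℝ => (if |x - z| ≤ t then (1:ℝ) else 0) * |y - z| ^ r) =
      (Icc (x - t) (x + t)).indicator (fun z => |y - z| ^ r) := by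
    funext z
    have hiff : |x - z| ≤ t ↔ z ∈ Icc (x - t) (x + t) := by
      rw [abs_sub_comm, abs_le, mem_Icc]
      constructor <;> intro h <;> constructor <;> linarith [h.1, h.2]
    rw [Set.indicator_apply]
    by_cases hz : z ∈ Icc (x - t) (x + t)
    · rw [if_pos hz, if_pos (hiff.mpr hz), one_mul]
    · rw [if_neg hz, if_neg (fun h => hz (hiff.mp h)), zero_mul]
  rw [h1, MeasureTheory.integral_indicator measurableSet_Icc, integral_Icc_eq_integral_Ioc,
    ← intervalIntegral.integral_of_le (by linarith : x - t ≤ x + t),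
    intervalIntegral.integral_comp_sub_left (fun c => |c| ^ r) y]
  rw [Phi]
  congr 1 <;> ring

lemma window_one {t : ℝ} (ht : 0 ≤ t) (x : ℝ) :
    ∫ z : ℝ, (if |x - z| ≤ t then (1:ℝ) else 0) = 2 * t := by
  rw [ind_eq_indicator, MeasureTheory.integral_indicator measurableSet_Icc]
  rw [setIntegral_const, Real.volume_real_Icc_of_le (by linarith : x - t ≤ x + t), smul_eq_mul,
    mul_one]
  ring

lemma window_one_integrable {t : ℝ} (x : ℝ) :
    Integrable (fun z : ℝ => if |x - z| ≤ t then (1:ℝ) else 0) := by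
  rw [ind_eq_indicator]
  rw [integrable_indicator_iff measurableSet_Icc]
  exact integrableOn_const measure_Icc_lt_top.ne

lemma window_integrable {r : ℝ} (hr : -1 < r) {t : ℝ} (x y : ℝ) :
    Integrable (fun z : ℝ => (if |x - z| ≤ t then (1:ℝ) else 0) * |y - z| ^ r) := by
  by_cases ht : 0 ≤ t
  case neg =>
    have : ∀ z : ℝ, (if |x - z| ≤ t then (1:ℝ) else 0) * |y - z| ^ r = 0 := by
      intro z
      rw [if_neg (by intro h; exact ht (le_trans (abs_nonneg _) h)), zero_mul]
    simp only [this]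
    exact integrable_zero _ _ _
  have h1 : (fun z : ℝ => (if |x - z| ≤ t then (1:ℝ) else 0) * |y - z| ^ r) =
      (Icc (x - t) (x + t)).indicator (fun z => |y - z| ^ r) := by
    funext z
    have hiff : |x - z| ≤ t ↔ z ∈ Icc (x - t) (x + t) := by
      rw [abs_sub_comm, abs_le, mem_Icc]
      constructor <;> intro h <;> constructor <;> linarith [h.1, h.2]
    rw [Set.indicator_apply]
    by_cases hz : z ∈ Icc (x - t) (x + t)
    · rw [if_pos hz, if_pos (hiff.mpr hz), one_mul]
    · rw [if_neg hz, if_neg (fun h => hz (hiff.mp h)), zero_mul]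
  rw [h1, integrable_indicator_iff measurableSet_Icc]
  have h2 := (abs_rpow_ii hr (y - (x - t)) (y - (x + t))).comp_sub_left y
  simp only [sub_sub_cancel] at h2
  rw [intervalIntegrable_iff, uIoc_of_le (by linarith : x - t ≤ x + t)] at h2
  rwa [integrableOn_Icc_iff_integrableOn_Ioc]

/-- Shift an outer integral of `Phi` into the fixed window `[-2R, 2R]`. -/
lemma outer_shift {r : ℝ} (hr : -1 < r) {s R x : ℝ} (hs : 0 ≤ s) (hx : |x| ≤ R) :
    ∫ w in (-R)..R, Phi r s (x - w) ≤ ∫ u in (-(2*R))..(2*R), Phi r s u := by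
  rw [intervalIntegral.integral_comp_sub_left (Phi r s) x]
  have hR : 0 ≤ R := le_trans (abs_nonneg x) hx
  rw [abs_le] at hx
  apply intervalIntegral.integral_mono_interval (by linarith) (by linarith) (by linarith)
  · filter_upwards with u using Phi_nonneg s u hs
  · exact ((Phi_continuous hr s).intervalIntegrable _ _)

/-- The key rate bound: integral of `Phi` over `[-2R,2R]`. -/
lemma psi_bound {r : ℝ} (hr : -1 < r) {s R : ℝ} (hs : 0 < s) (hsR : s ≤ R) :
    ∫ u in (-(2*R))..(2*R), Phi r s u ≤ 4 * s * (3*R) ^ (r+1) / (r+1) := by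
  have hK : ∀ a b : ℝ, IntervalIntegrable (K r) volume a b :=
    fun a b => (K_continuous hr).intervalIntegrable a b
  have hKc : ∀ c : ℝ, ∀ a b : ℝ,
      IntervalIntegrable (fun u => K r (u + c)) volume a b :=
    fun c a b => (((K_continuous hr).comp (continuous_id.add continuous_const)).intervalIntegrable a b)
  have e1 : ∫ u in (-(2*R))..(2*R), Phi r s u
      = (∫ u in (-(2*R))..(2*R), K r (u + s)) - ∫ u in (-(2*R))..(2*R), K r (u + (-s)) := by
    rw [← intervalIntegral.integral_sub (hKc s _ _) (hKc (-s) _ _)]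
    apply intervalIntegral.integral_congr
    intro u _
    rw [Phi_eq_K hr]
    ring_nf
  rw [e1, intervalIntegral.integral_comp_add_right (K r) s,
    intervalIntegral.integral_comp_add_right (K r) (-s)]
  have e2 : (∫ u in (-(2*R)+s)..(2*R+s), K r u) - ∫ u in (-(2*R)+(-s))..(2*R+(-s)), K r u
      = (∫ u in (2*R-s)..(2*R+s), K r u) - ∫ u in (-(2*R)-s)..(-(2*R)+s), K r u := by
    have a1 : (∫ u in (-(2*R)+s)..(2*R-s), K r u) + ∫ u in (2*R-s)..(2*R+s), K r u
        = ∫ u in (-(2*R)+s)..(2*R+s), K r u :=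
      intervalIntegral.integral_add_adjacent_intervals (hK _ _) (hK _ _)
    have a2 : (∫ u in (-(2*R)-s)..(-(2*R)+s), K r u) + ∫ u in (-(2*R)+s)..(2*R-s), K r u
        = ∫ u in (-(2*R)-s)..(2*R-s), K r u :=
      intervalIntegral.integral_add_adjacent_intervals (hK _ _) (hK _ _)
    have h3 : (-(2*R)+(-s)) = -(2*R)-s := by ring
    have h4 : (2*R+(-s)) = 2*R-s := by ring
    rw [h3, h4, ← a1, ← a2]
    ring
  rw [e2]
  have hb1 : (∫ u in (2*R-s)..(2*R+s), K r u) ≤ 2 * s * K r (2*R+s) := by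
    calc (∫ u in (2*R-s)..(2*R+s), K r u) ≤ ∫ _u in (2*R-s)..(2*R+s), K r (2*R+s) := by
          apply intervalIntegral.integral_mono_on (by linarith) (hK _ _)
            (intervalIntegrable_const)
          intro u hu
          exact K_mono hr hu.2
      _ = 2 * s * K r (2*R+s) := by
          rw [intervalIntegral.integral_const, smul_eq_mul]; ring_nf
  have hb2 : -(2 * s * K r (2*R+s)) ≤ ∫ u in (-(2*R)-s)..(-(2*R)+s), K r u := by
    calc -(2 * s * K r (2*R+s)) = (∫ _u in (-(2*R)-s)..(-(2*R)+s), K r (-(2*R+s))) := by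
          rw [intervalIntegral.integral_const, smul_eq_mul, K_odd]; ring_nf
      _ ≤ ∫ u in (-(2*R)-s)..(-(2*R)+s), K r u := by
          apply intervalIntegral.integral_mono_on (by linarith) (intervalIntegrable_const) (hK _ _)
          intro u hu
          apply K_mono hr
          have := hu.1; linarith
  have hKval : K r (2*R+s) ≤ (3*R) ^ (r+1) / (r+1) := by
    rw [K_val hr (by linarith : (0:ℝ) ≤ 2*R+s)]
    gcongr <;> linarith
  have hfin : 4 * s * K r (2*R+s) ≤ 4 * s * (3*R) ^ (r+1) / (r+1) := by
    have := mul_le_mul_of_nonneg_left hKval (by linarith : (0:ℝ) ≤ 4 * s)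
    calc 4 * s * K r (2*R+s) ≤ 4 * s * ((3*R) ^ (r+1) / (r+1)) := this
      _ = 4 * s * (3*R) ^ (r+1) / (r+1) := by ring
  linarith


lemma ind_nonneg {P : Prop} [Decidable P] : (0:ℝ) ≤ if P then (1:ℝ) else 0 := by
  split_ifs <;> norm_num

/-- Innermost level: integrate out `z2`. -/
lemma B6 {p t : ℝ} (hp : -1 < p) (ht : 0 < t) (x1 x2 x3 x4 y1 y2 y3 y4 z1 : ℝ) :
    (∫ z2 : ℝ,
      (if |x1 - z1| ≤ t then (1:ℝ) else 0) * (if |x2 - z2| ≤ t then (1:ℝ) else 0) *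
      (if |x3 - y3| ≤ t then (1:ℝ) else 0) * (if |x4 - y4| ≤ t then (1:ℝ) else 0) *
      (if |y1 - z1| ≤ t then (1:ℝ) else 0) * (if |y2 - z2| ≤ t then (1:ℝ) else 0) *
      (|y1 - y3| ^ p * |y2 - y4| ^ p * |z1 - z2| ^ p)) ≤
    ((if |x1 - z1| ≤ t then (1:ℝ) else 0) * (if |x3 - y3| ≤ t then (1:ℝ) else 0) *
     (if |x4 - y4| ≤ t then (1:ℝ) else 0) * (if |y1 - z1| ≤ t then (1:ℝ) else 0) *
     (if |x2 - y2| ≤ 2*t then (1:ℝ) else 0) * (|y1 - y3| ^ p * |y2 - y4| ^ p)) *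
      Phi p t (z1 - x2) := by
  set c : ℝ := (if |x1 - z1| ≤ t then (1:ℝ) else 0) * (if |x3 - y3| ≤ t then (1:ℝ) else 0) *
     (if |x4 - y4| ≤ t then (1:ℝ) else 0) * (if |y1 - z1| ≤ t then (1:ℝ) else 0) *
     (if |x2 - y2| ≤ 2*t then (1:ℝ) else 0) * (|y1 - y3| ^ p * |y2 - y4| ^ p) with hc
  have hcn : 0 ≤ c := by
    apply_rules [mul_nonneg, ind_nonneg, Real.rpow_nonneg, abs_nonneg]
  have key : (∫ z2 : ℝ,
      (if |x1 - z1| ≤ t then (1:ℝ) else 0) * (if |x2 - z2| ≤ t then (1:ℝ) else 0) *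
      (if |x3 - y3| ≤ t then (1:ℝ) else 0) * (if |x4 - y4| ≤ t then (1:ℝ) else 0) *
      (if |y1 - z1| ≤ t then (1:ℝ) else 0) * (if |y2 - z2| ≤ t then (1:ℝ) else 0) *
      (|y1 - y3| ^ p * |y2 - y4| ^ p * |z1 - z2| ^ p)) ≤
      ∫ z2 : ℝ, c * ((if |x2 - z2| ≤ t then (1:ℝ) else 0) * |z1 - z2| ^ p) := by
    apply integral_mono_of_nonneg
    · filter_upwards with z2
      apply_rules [mul_nonneg, ind_nonneg, Real.rpow_nonneg, abs_nonneg]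
    · exact (window_integrable hp x2 z1).const_mul c
    · filter_upwards with z2
      by_cases h2 : |x2 - z2| ≤ t
      · by_cases h6 : |y2 - z2| ≤ t
        · have habs : |x2 - y2| ≤ 2*t := by
            have h := abs_sub_le x2 z2 y2
            rw [abs_sub_comm z2 y2] at h
            linarith
          rw [hc]
          simp only [if_pos h2, if_pos h6, if_pos habs]
          apply le_of_eq; ring
        · simp only [if_neg h6]
          have : 0 ≤ c * ((if |x2 - z2| ≤ t then (1:ℝ) else 0) * |z1 - z2| ^ p) := by
            apply_rules [mul_nonneg, ind_nonneg, Real.rpow_nonneg, abs_nonneg]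
          calc (if |x1 - z1| ≤ t then (1:ℝ) else 0) * (if |x2 - z2| ≤ t then (1:ℝ) else 0) *
              (if |x3 - y3| ≤ t then (1:ℝ) else 0) * (if |x4 - y4| ≤ t then (1:ℝ) else 0) *
              (if |y1 - z1| ≤ t then (1:ℝ) else 0) * 0 *
              (|y1 - y3| ^ p * |y2 - y4| ^ p * |z1 - z2| ^ p) = 0 := by ring
            _ ≤ _ := this
      · simp only [if_neg h2]
        have : 0 ≤ c * ((0:ℝ) * |z1 - z2| ^ p) := by
          apply_rules [mul_nonneg, ind_nonneg, le_refl, Real.rpow_nonneg, abs_nonneg]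
        calc (if |x1 - z1| ≤ t then (1:ℝ) else 0) * 0 *
            (if |x3 - y3| ≤ t then (1:ℝ) else 0) * (if |x4 - y4| ≤ t then (1:ℝ) else 0) *
            (if |y1 - z1| ≤ t then (1:ℝ) else 0) * (if |y2 - z2| ≤ t then (1:ℝ) else 0) *
            (|y1 - y3| ^ p * |y2 - y4| ^ p * |z1 - z2| ^ p) = 0 := by ring
          _ ≤ _ := this
  calc _ ≤ ∫ z2 : ℝ, c * ((if |x2 - z2| ≤ t then (1:ℝ) else 0) * |z1 - z2| ^ p) := key
    _ = c * Phi p t (z1 - x2) := by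
        rw [MeasureTheory.integral_const_mul, window_eval hp ht.le x2 z1]
    _ = _ := rfl

/-- Level `z1`. -/
lemma B5 {p t : ℝ} (hp : -1 < p) (ht : 0 < t) (x1 x2 x3 x4 y1 y2 y3 y4 : ℝ) :
    (∫ z1 : ℝ, ∫ z2 : ℝ,
      (if |x1 - z1| ≤ t then (1:ℝ) else 0) * (if |x2 - z2| ≤ t then (1:ℝ) else 0) *
      (if |x3 - y3| ≤ t then (1:ℝ) else 0) * (if |x4 - y4| ≤ t then (1:ℝ) else 0) *
      (if |y1 - z1| ≤ t then (1:ℝ) else 0) * (if |y2 - z2| ≤ t then (1:ℝ) else 0) *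
      (|y1 - y3| ^ p * |y2 - y4| ^ p * |z1 - z2| ^ p)) ≤
    ((if |x3 - y3| ≤ t then (1:ℝ) else 0) * (if |x4 - y4| ≤ t then (1:ℝ) else 0) *
     (if |x1 - y1| ≤ 2*t then (1:ℝ) else 0) * (if |x2 - y2| ≤ 2*t then (1:ℝ) else 0) *
     (|y1 - y3| ^ p * |y2 - y4| ^ p)) * (2 * t * Phi p (2*t) (x1 - x2)) := by
  set c : ℝ := (if |x3 - y3| ≤ t then (1:ℝ) else 0) * (if |x4 - y4| ≤ t then (1:ℝ) else 0) *
     (if |x1 - y1| ≤ 2*t then (1:ℝ) else 0) * (if |x2 - y2| ≤ 2*t then (1:ℝ) else 0) *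
     (|y1 - y3| ^ p * |y2 - y4| ^ p) * Phi p (2*t) (x1 - x2) with hc
  have hcn : 0 ≤ c := by
    apply_rules [mul_nonneg, ind_nonneg, Real.rpow_nonneg, abs_nonneg, Phi_nonneg] <;> linarith
  have key : (∫ z1 : ℝ, ∫ z2 : ℝ,
      (if |x1 - z1| ≤ t then (1:ℝ) else 0) * (if |x2 - z2| ≤ t then (1:ℝ) else 0) *
      (if |x3 - y3| ≤ t then (1:ℝ) else 0) * (if |x4 - y4| ≤ t then (1:ℝ) else 0) *
      (if |y1 - z1| ≤ t then (1:ℝ) else 0) * (if |y2 - z2| ≤ t then (1:ℝ) else 0) *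
      (|y1 - y3| ^ p * |y2 - y4| ^ p * |z1 - z2| ^ p)) ≤
      ∫ z1 : ℝ, c * (if |x1 - z1| ≤ t then (1:ℝ) else 0) := by
    apply integral_mono_of_nonneg
    · filter_upwards with z1
      apply MeasureTheory.integral_nonneg
      intro z2
      apply_rules [mul_nonneg, ind_nonneg, Real.rpow_nonneg, abs_nonneg]
    · exact (window_one_integrable x1).const_mul c
    · filter_upwards with z1
      refine le_trans (B6 hp ht x1 x2 x3 x4 y1 y2 y3 y4 z1) ?_
      by_cases h1 : |x1 - z1| ≤ t
      · by_cases h5 : |y1 - z1| ≤ t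
        · have hj : |x1 - y1| ≤ 2*t := by
            have h := abs_sub_le x1 z1 y1
            rw [abs_sub_comm z1 y1] at h
            linarith
          have hphi : Phi p t (z1 - x2) ≤ Phi p (2*t) (x1 - x2) := by
            have habs := abs_le.mp h1
            apply Phi_mono hp ht.le <;> [skip; skip] <;> cases habs with
            | intro hl hr => linarith
          rw [hc]
          simp only [if_pos h1, if_pos h5, if_pos hj]
          have hd : (0:ℝ) ≤ (if |x3 - y3| ≤ t then (1:ℝ) else 0) *
              (if |x4 - y4| ≤ t then (1:ℝ) else 0) *
              (if |x2 - y2| ≤ 2*t then (1:ℝ) else 0) * (|y1 - y3| ^ p * |y2 - y4| ^ p) := by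
            apply_rules [mul_nonneg, ind_nonneg, Real.rpow_nonneg, abs_nonneg]
          calc (1:ℝ) * (if |x3 - y3| ≤ t then (1:ℝ) else 0) *
              (if |x4 - y4| ≤ t then (1:ℝ) else 0) * 1 *
              (if |x2 - y2| ≤ 2*t then (1:ℝ) else 0) * (|y1 - y3| ^ p * |y2 - y4| ^ p) *
              Phi p t (z1 - x2)
              = ((if |x3 - y3| ≤ t then (1:ℝ) else 0) * (if |x4 - y4| ≤ t then (1:ℝ) else 0) *
                 (if |x2 - y2| ≤ 2*t then (1:ℝ) else 0) * (|y1 - y3| ^ p * |y2 - y4| ^ p)) *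
                Phi p t (z1 - x2) := by ring
            _ ≤ ((if |x3 - y3| ≤ t then (1:ℝ) else 0) * (if |x4 - y4| ≤ t then (1:ℝ) else 0) *
                 (if |x2 - y2| ≤ 2*t then (1:ℝ) else 0) * (|y1 - y3| ^ p * |y2 - y4| ^ p)) *
                Phi p (2*t) (x1 - x2) := mul_le_mul_of_nonneg_left hphi hd
            _ = _ := by ring
        · simp only [if_neg h5]
          have h0 : 0 ≤ c * (if |x1 - z1| ≤ t then (1:ℝ) else 0) :=
            mul_nonneg hcn ind_nonneg
          calc (if |x1 - z1| ≤ t then (1:ℝ) else 0) * (if |x3 - y3| ≤ t then (1:ℝ) else 0) *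
              (if |x4 - y4| ≤ t then (1:ℝ) else 0) * 0 *
              (if |x2 - y2| ≤ 2*t then (1:ℝ) else 0) * (|y1 - y3| ^ p * |y2 - y4| ^ p) *
              Phi p t (z1 - x2) = 0 := by ring
            _ ≤ _ := h0
      · simp only [if_neg h1]
        calc (0:ℝ) * (if |x3 - y3| ≤ t then (1:ℝ) else 0) *
            (if |x4 - y4| ≤ t then (1:ℝ) else 0) * (if |y1 - z1| ≤ t then (1:ℝ) else 0) *
            (if |x2 - y2| ≤ 2*t then (1:ℝ) else 0) * (|y1 - y3| ^ p * |y2 - y4| ^ p) *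
            Phi p t (z1 - x2) = 0 := by ring
          _ ≤ c * 0 := by rw [mul_zero]
  calc _ ≤ ∫ z1 : ℝ, c * (if |x1 - z1| ≤ t then (1:ℝ) else 0) := key
    _ = c * (2*t) := by rw [MeasureTheory.integral_const_mul, window_one ht.le x1]
    _ = _ := by rw [hc]; ring

/-- Level `y4`. -/
lemma B4 {p t : ℝ} (hp : -1 < p) (ht : 0 < t) (x1 x2 x3 x4 y1 y2 y3 : ℝ) :
    (∫ y4 : ℝ, ∫ z1 : ℝ, ∫ z2 : ℝ,
      (if |x1 - z1| ≤ t then (1:ℝ) else 0) * (if |x2 - z2| ≤ t then (1:ℝ) else 0) *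
      (if |x3 - y3| ≤ t then (1:ℝ) else 0) * (if |x4 - y4| ≤ t then (1:ℝ) else 0) *
      (if |y1 - z1| ≤ t then (1:ℝ) else 0) * (if |y2 - z2| ≤ t then (1:ℝ) else 0) *
      (|y1 - y3| ^ p * |y2 - y4| ^ p * |z1 - z2| ^ p)) ≤
    ((if |x3 - y3| ≤ t then (1:ℝ) else 0) * (if |x1 - y1| ≤ 2*t then (1:ℝ) else 0) *
     (if |x2 - y2| ≤ 2*t then (1:ℝ) else 0) * |y1 - y3| ^ p) *
      (2 * t * Phi p (2*t) (x1 - x2) * Phi p (3*t) (x2 - x4)) := by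
  set c : ℝ := (if |x3 - y3| ≤ t then (1:ℝ) else 0) * (if |x1 - y1| ≤ 2*t then (1:ℝ) else 0) *
     (if |x2 - y2| ≤ 2*t then (1:ℝ) else 0) * |y1 - y3| ^ p *
     (2 * t * Phi p (2*t) (x1 - x2)) with hc
  have hcn : 0 ≤ c := by
    apply_rules [mul_nonneg, ind_nonneg, Real.rpow_nonneg, abs_nonneg, Phi_nonneg] <;> linarith
  have key : (∫ y4 : ℝ, ∫ z1 : ℝ, ∫ z2 : ℝ,
      (if |x1 - z1| ≤ t then (1:ℝ) else 0) * (if |x2 - z2| ≤ t then (1:ℝ) else 0) *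
      (if |x3 - y3| ≤ t then (1:ℝ) else 0) * (if |x4 - y4| ≤ t then (1:ℝ) else 0) *
      (if |y1 - z1| ≤ t then (1:ℝ) else 0) * (if |y2 - z2| ≤ t then (1:ℝ) else 0) *
      (|y1 - y3| ^ p * |y2 - y4| ^ p * |z1 - z2| ^ p)) ≤
      ∫ y4 : ℝ, c * ((if |x4 - y4| ≤ t then (1:ℝ) else 0) * |y2 - y4| ^ p) := by
    apply integral_mono_of_nonneg
    · filter_upwards with y4
      apply MeasureTheory.integral_nonneg; intro z1
      apply MeasureTheory.integral_nonneg; intro z2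
      apply_rules [mul_nonneg, ind_nonneg, Real.rpow_nonneg, abs_nonneg]
    · exact (window_integrable hp x4 y2).const_mul c
    · filter_upwards with y4
      refine le_trans (B5 hp ht x1 x2 x3 x4 y1 y2 y3 y4) (le_of_eq ?_)
      rw [hc]; ring
  refine le_trans key ?_
  rw [MeasureTheory.integral_const_mul, window_eval hp ht.le x4 y2]
  by_cases hj2 : |x2 - y2| ≤ 2*t
  · have habs := abs_le.mp hj2
    have hphi : Phi p t (y2 - x4) ≤ Phi p (3*t) (x2 - x4) := by
      apply Phi_mono hp ht.le <;> cases habs with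
      | intro hl hr => linarith
    calc c * Phi p t (y2 - x4) ≤ c * Phi p (3*t) (x2 - x4) :=
          mul_le_mul_of_nonneg_left hphi hcn
      _ = _ := by rw [hc]; ring
  · rw [hc]
    simp only [if_neg hj2]
    apply le_of_eq; ring

/-- Level `y3`. -/
lemma B3 {p t : ℝ} (hp : -1 < p) (ht : 0 < t) (x1 x2 x3 x4 y1 y2 : ℝ) :
    (∫ y3 : ℝ, ∫ y4 : ℝ, ∫ z1 : ℝ, ∫ z2 : ℝ,
      (if |x1 - z1| ≤ t then (1:ℝ) else 0) * (if |x2 - z2| ≤ t then (1:ℝ) else 0) *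
      (if |x3 - y3| ≤ t then (1:ℝ) else 0) * (if |x4 - y4| ≤ t then (1:ℝ) else 0) *
      (if |y1 - z1| ≤ t then (1:ℝ) else 0) * (if |y2 - z2| ≤ t then (1:ℝ) else 0) *
      (|y1 - y3| ^ p * |y2 - y4| ^ p * |z1 - z2| ^ p)) ≤
    ((if |x1 - y1| ≤ 2*t then (1:ℝ) else 0) * (if |x2 - y2| ≤ 2*t then (1:ℝ) else 0)) *
      (2 * t * Phi p (2*t) (x1 - x2) * Phi p (3*t) (x2 - x4) * Phi p (3*t) (x1 - x3)) := by
  set c : ℝ := (if |x1 - y1| ≤ 2*t then (1:ℝ) else 0) * (if |x2 - y2| ≤ 2*t then (1:ℝ) else 0) *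
     (2 * t * Phi p (2*t) (x1 - x2) * Phi p (3*t) (x2 - x4)) with hc
  have hcn : 0 ≤ c := by
    apply_rules [mul_nonneg, ind_nonneg, Real.rpow_nonneg, abs_nonneg, Phi_nonneg] <;> linarith
  have key : (∫ y3 : ℝ, ∫ y4 : ℝ, ∫ z1 : ℝ, ∫ z2 : ℝ,
      (if |x1 - z1| ≤ t then (1:ℝ) else 0) * (if |x2 - z2| ≤ t then (1:ℝ) else 0) *
      (if |x3 - y3| ≤ t then (1:ℝ) else 0) * (if |x4 - y4| ≤ t then (1:ℝ) else 0) *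
      (if |y1 - z1| ≤ t then (1:ℝ) else 0) * (if |y2 - z2| ≤ t then (1:ℝ) else 0) *
      (|y1 - y3| ^ p * |y2 - y4| ^ p * |z1 - z2| ^ p)) ≤
      ∫ y3 : ℝ, c * ((if |x3 - y3| ≤ t then (1:ℝ) else 0) * |y1 - y3| ^ p) := by
    apply integral_mono_of_nonneg
    · filter_upwards with y3
      apply MeasureTheory.integral_nonneg; intro y4
      apply MeasureTheory.integral_nonneg; intro z1
      apply MeasureTheory.integral_nonneg; intro z2
      apply_rules [mul_nonneg, ind_nonneg, Real.rpow_nonneg, abs_nonneg]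
    · exact (window_integrable hp x3 y1).const_mul c
    · filter_upwards with y3
      refine le_trans (B4 hp ht x1 x2 x3 x4 y1 y2 y3) (le_of_eq ?_)
      rw [hc]; ring
  refine le_trans key ?_
  rw [MeasureTheory.integral_const_mul, window_eval hp ht.le x3 y1]
  by_cases hj1 : |x1 - y1| ≤ 2*t
  · have habs := abs_le.mp hj1
    have hphi : Phi p t (y1 - x3) ≤ Phi p (3*t) (x1 - x3) := by
      apply Phi_mono hp ht.le <;> cases habs with
      | intro hl hr => linarith
    calc c * Phi p t (y1 - x3) ≤ c * Phi p (3*t) (x1 - x3) :=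
          mul_le_mul_of_nonneg_left hphi hcn
      _ = _ := by rw [hc]; ring
  · rw [hc]
    simp only [if_neg hj1]
    apply le_of_eq; ring

/-- Level `y2`. -/
lemma B2 {p t : ℝ} (hp : -1 < p) (ht : 0 < t) (x1 x2 x3 x4 y1 : ℝ) :
    (∫ y2 : ℝ, ∫ y3 : ℝ, ∫ y4 : ℝ, ∫ z1 : ℝ, ∫ z2 : ℝ,
      (if |x1 - z1| ≤ t then (1:ℝ) else 0) * (if |x2 - z2| ≤ t then (1:ℝ) else 0) *
      (if |x3 - y3| ≤ t then (1:ℝ) else 0) * (if |x4 - y4| ≤ t then (1:ℝ) else 0) *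
      (if |y1 - z1| ≤ t then (1:ℝ) else 0) * (if |y2 - z2| ≤ t then (1:ℝ) else 0) *
      (|y1 - y3| ^ p * |y2 - y4| ^ p * |z1 - z2| ^ p)) ≤
    (if |x1 - y1| ≤ 2*t then (1:ℝ) else 0) *
      (8 * t^2 * Phi p (2*t) (x1 - x2) * Phi p (3*t) (x2 - x4) * Phi p (3*t) (x1 - x3)) := by
  set c : ℝ := (if |x1 - y1| ≤ 2*t then (1:ℝ) else 0) *
     (2 * t * Phi p (2*t) (x1 - x2) * Phi p (3*t) (x2 - x4) * Phi p (3*t) (x1 - x3)) with hc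
  have key : (∫ y2 : ℝ, ∫ y3 : ℝ, ∫ y4 : ℝ, ∫ z1 : ℝ, ∫ z2 : ℝ,
      (if |x1 - z1| ≤ t then (1:ℝ) else 0) * (if |x2 - z2| ≤ t then (1:ℝ) else 0) *
      (if |x3 - y3| ≤ t then (1:ℝ) else 0) * (if |x4 - y4| ≤ t then (1:ℝ) else 0) *
      (if |y1 - z1| ≤ t then (1:ℝ) else 0) * (if |y2 - z2| ≤ t then (1:ℝ) else 0) *
      (|y1 - y3| ^ p * |y2 - y4| ^ p * |z1 - z2| ^ p)) ≤
      ∫ y2 : ℝ, c * (if |x2 - y2| ≤ 2*t then (1:ℝ) else 0) := by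
    apply integral_mono_of_nonneg
    · filter_upwards with y2
      apply MeasureTheory.integral_nonneg; intro y3
      apply MeasureTheory.integral_nonneg; intro y4
      apply MeasureTheory.integral_nonneg; intro z1
      apply MeasureTheory.integral_nonneg; intro z2
      apply_rules [mul_nonneg, ind_nonneg, Real.rpow_nonneg, abs_nonneg]
    · exact (window_one_integrable x2).const_mul c
    · filter_upwards with y2
      refine le_trans (B3 hp ht x1 x2 x3 x4 y1 y2) (le_of_eq ?_)
      rw [hc]; ring
  refine le_trans key (le_of_eq ?_)
  rw [MeasureTheory.integral_const_mul, window_one (by linarith : (0:ℝ) ≤ 2*t) x2, hc]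
  ring

/-- Level `y1`: the full inner bound. -/
lemma B1 {p t : ℝ} (hp : -1 < p) (ht : 0 < t) (x1 x2 x3 x4 : ℝ) :
    (∫ y1 : ℝ, ∫ y2 : ℝ, ∫ y3 : ℝ, ∫ y4 : ℝ, ∫ z1 : ℝ, ∫ z2 : ℝ,
      (if |x1 - z1| ≤ t then (1:ℝ) else 0) * (if |x2 - z2| ≤ t then (1:ℝ) else 0) *
      (if |x3 - y3| ≤ t then (1:ℝ) else 0) * (if |x4 - y4| ≤ t then (1:ℝ) else 0) *
      (if |y1 - z1| ≤ t then (1:ℝ) else 0) * (if |y2 - z2| ≤ t then (1:ℝ) else 0) *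
      (|y1 - y3| ^ p * |y2 - y4| ^ p * |z1 - z2| ^ p)) ≤
    32 * t^3 * (Phi p (2*t) (x1 - x2) * Phi p (3*t) (x1 - x3) * Phi p (3*t) (x2 - x4)) := by
  set c : ℝ := 8 * t^2 * Phi p (2*t) (x1 - x2) * Phi p (3*t) (x2 - x4) * Phi p (3*t) (x1 - x3)
    with hc
  have key : (∫ y1 : ℝ, ∫ y2 : ℝ, ∫ y3 : ℝ, ∫ y4 : ℝ, ∫ z1 : ℝ, ∫ z2 : ℝ,
      (if |x1 - z1| ≤ t then (1:ℝ) else 0) * (if |x2 - z2| ≤ t then (1:ℝ) else 0) *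
      (if |x3 - y3| ≤ t then (1:ℝ) else 0) * (if |x4 - y4| ≤ t then (1:ℝ) else 0) *
      (if |y1 - z1| ≤ t then (1:ℝ) else 0) * (if |y2 - z2| ≤ t then (1:ℝ) else 0) *
      (|y1 - y3| ^ p * |y2 - y4| ^ p * |z1 - z2| ^ p)) ≤
      ∫ y1 : ℝ, c * (if |x1 - y1| ≤ 2*t then (1:ℝ) else 0) := by
    apply integral_mono_of_nonneg
    · filter_upwards with y1
      apply MeasureTheory.integral_nonneg; intro y2
      apply MeasureTheory.integral_nonneg; intro y3
      apply MeasureTheory.integral_nonneg; intro y4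
      apply MeasureTheory.integral_nonneg; intro z1
      apply MeasureTheory.integral_nonneg; intro z2
      apply_rules [mul_nonneg, ind_nonneg, Real.rpow_nonneg, abs_nonneg]
    · exact (window_one_integrable x1).const_mul c
    · filter_upwards with y1
      refine le_trans (B2 hp ht x1 x2 x3 x4 y1) (le_of_eq ?_)
      rw [hc]; ring
  refine le_trans key (le_of_eq ?_)
  rw [MeasureTheory.integral_const_mul, window_one (by linarith : (0:ℝ) ≤ 2*t) x1, hc]
  ring

lemma inner_nonneg {p t : ℝ} (x1 x2 x3 x4 : ℝ) :
    0 ≤ ∫ y1 : ℝ, ∫ y2 : ℝ, ∫ y3 : ℝ, ∫ y4 : ℝ, ∫ z1 : ℝ, ∫ z2 : ℝ,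
      (if |x1 - z1| ≤ t then (1:ℝ) else 0) * (if |x2 - z2| ≤ t then (1:ℝ) else 0) *
      (if |x3 - y3| ≤ t then (1:ℝ) else 0) * (if |x4 - y4| ≤ t then (1:ℝ) else 0) *
      (if |y1 - z1| ≤ t then (1:ℝ) else 0) * (if |y2 - z2| ≤ t then (1:ℝ) else 0) *
      (|y1 - y3| ^ p * |y2 - y4| ^ p * |z1 - z2| ^ p) := by
  apply MeasureTheory.integral_nonneg; intro y1
  apply MeasureTheory.integral_nonneg; intro y2
  apply MeasureTheory.integral_nonneg; intro y3
  apply MeasureTheory.integral_nonneg; intro y4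
  apply MeasureTheory.integral_nonneg; intro z1
  apply MeasureTheory.integral_nonneg; intro z2
  apply_rules [mul_nonneg, ind_nonneg, Real.rpow_nonneg, abs_nonneg]

lemma Psi_nonneg {p s R : ℝ} (hs : 0 ≤ s) (hR : 0 ≤ R) :
    0 ≤ ∫ u in (-(2*R))..(2*R), Phi p s u :=
  intervalIntegral.integral_nonneg (by linarith) (fun u _ => Phi_nonneg s u hs)

/-- Level `x4`. -/
lemma O4 {p t R : ℝ} (hp : -1 < p) (ht : 0 < t) (hR : 0 < R) (x1 x2 x3 : ℝ)
    (h2 : |x2| ≤ R) :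
    (∫ x4 in (-R)..R, ∫ y1 : ℝ, ∫ y2 : ℝ, ∫ y3 : ℝ, ∫ y4 : ℝ, ∫ z1 : ℝ, ∫ z2 : ℝ,
      (if |x1 - z1| ≤ t then (1:ℝ) else 0) * (if |x2 - z2| ≤ t then (1:ℝ) else 0) *
      (if |x3 - y3| ≤ t then (1:ℝ) else 0) * (if |x4 - y4| ≤ t then (1:ℝ) else 0) *
      (if |y1 - z1| ≤ t then (1:ℝ) else 0) * (if |y2 - z2| ≤ t then (1:ℝ) else 0) *
      (|y1 - y3| ^ p * |y2 - y4| ^ p * |z1 - z2| ^ p)) ≤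
    (32 * t^3 * (Phi p (2*t) (x1 - x2) * Phi p (3*t) (x1 - x3))) *
      ∫ u in (-(2*R))..(2*R), Phi p (3*t) u := by
  set c : ℝ := 32 * t^3 * (Phi p (2*t) (x1 - x2) * Phi p (3*t) (x1 - x3)) with hc
  have hcn : 0 ≤ c := mul_nonneg (by positivity)
    (mul_nonneg (Phi_nonneg _ _ (by linarith)) (Phi_nonneg _ _ (by linarith)))
  rw [intervalIntegral.integral_of_le (by linarith : -R ≤ R)]
  have key : (∫ x4 in Ioc (-R) R, (∫ y1 : ℝ, ∫ y2 : ℝ, ∫ y3 : ℝ, ∫ y4 : ℝ, ∫ z1 : ℝ, ∫ z2 : ℝ,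
      (if |x1 - z1| ≤ t then (1:ℝ) else 0) * (if |x2 - z2| ≤ t then (1:ℝ) else 0) *
      (if |x3 - y3| ≤ t then (1:ℝ) else 0) * (if |x4 - y4| ≤ t then (1:ℝ) else 0) *
      (if |y1 - z1| ≤ t then (1:ℝ) else 0) * (if |y2 - z2| ≤ t then (1:ℝ) else 0) *
      (|y1 - y3| ^ p * |y2 - y4| ^ p * |z1 - z2| ^ p))) ≤
      ∫ x4 in Ioc (-R) R, c * Phi p (3*t) (x2 - x4) := by
    apply integral_mono_of_nonneg
    · filter_upwards with x4 using inner_nonneg x1 x2 x3 x4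
    · apply Continuous.integrableOn_Ioc
      exact continuous_const.mul
        ((Phi_continuous hp (3*t)).comp (continuous_const.sub continuous_id))
    · filter_upwards with x4
      refine le_trans (B1 hp ht x1 x2 x3 x4) (le_of_eq ?_)
      rw [hc]; ring
  refine le_trans key ?_
  rw [MeasureTheory.integral_const_mul]
  apply mul_le_mul_of_nonneg_left ?_ hcn
  rw [← intervalIntegral.integral_of_le (by linarith : -R ≤ R)]
  exact outer_shift hp (by linarith) h2

/-- Level `x3`. -/
lemma O3 {p t R : ℝ} (hp : -1 < p) (ht : 0 < t) (hR : 0 < R) (x1 x2 : ℝ)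
    (h1 : |x1| ≤ R) (h2 : |x2| ≤ R) :
    (∫ x3 in (-R)..R, ∫ x4 in (-R)..R,
      ∫ y1 : ℝ, ∫ y2 : ℝ, ∫ y3 : ℝ, ∫ y4 : ℝ, ∫ z1 : ℝ, ∫ z2 : ℝ,
      (if |x1 - z1| ≤ t then (1:ℝ) else 0) * (if |x2 - z2| ≤ t then (1:ℝ) else 0) *
      (if |x3 - y3| ≤ t then (1:ℝ) else 0) * (if |x4 - y4| ≤ t then (1:ℝ) else 0) *
      (if |y1 - z1| ≤ t then (1:ℝ) else 0) * (if |y2 - z2| ≤ t then (1:ℝ) else 0) *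
      (|y1 - y3| ^ p * |y2 - y4| ^ p * |z1 - z2| ^ p)) ≤
    (32 * t^3 * Phi p (2*t) (x1 - x2) * (∫ u in (-(2*R))..(2*R), Phi p (3*t) u)) *
      ∫ u in (-(2*R))..(2*R), Phi p (3*t) u := by
  set Psi : ℝ := ∫ u in (-(2*R))..(2*R), Phi p (3*t) u with hPsi
  have hPsin : 0 ≤ Psi := Psi_nonneg (by linarith) hR.le
  set c : ℝ := 32 * t^3 * Phi p (2*t) (x1 - x2) * Psi with hc
  have hcn : 0 ≤ c := mul_nonneg
    (mul_nonneg (by positivity) (Phi_nonneg _ _ (by linarith))) hPsin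
  rw [intervalIntegral.integral_of_le (by linarith : -R ≤ R)]
  have key : (∫ x3 in Ioc (-R) R, ∫ x4 in (-R)..R,
      ∫ y1 : ℝ, ∫ y2 : ℝ, ∫ y3 : ℝ, ∫ y4 : ℝ, ∫ z1 : ℝ, ∫ z2 : ℝ,
      (if |x1 - z1| ≤ t then (1:ℝ) else 0) * (if |x2 - z2| ≤ t then (1:ℝ) else 0) *
      (if |x3 - y3| ≤ t then (1:ℝ) else 0) * (if |x4 - y4| ≤ t then (1:ℝ) else 0) *
      (if |y1 - z1| ≤ t then (1:ℝ) else 0) * (if |y2 - z2| ≤ t then (1:ℝ) else 0) *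
      (|y1 - y3| ^ p * |y2 - y4| ^ p * |z1 - z2| ^ p)) ≤
      ∫ x3 in Ioc (-R) R, c * Phi p (3*t) (x1 - x3) := by
    apply integral_mono_of_nonneg
    · filter_upwards with x3
      exact intervalIntegral.integral_nonneg (by linarith)
        (fun x4 _ => inner_nonneg x1 x2 x3 x4)
    · apply Continuous.integrableOn_Ioc
      exact continuous_const.mul
        ((Phi_continuous hp (3*t)).comp (continuous_const.sub continuous_id))
    · filter_upwards with x3
      refine le_trans (O4 hp ht hR x1 x2 x3 h2) (le_of_eq ?_)
      rw [hc, hPsi]; ring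
  refine le_trans key ?_
  rw [MeasureTheory.integral_const_mul]
  have := outer_shift (s := 3*t) hp (by linarith) h1 (r := p)
  calc c * ∫ x3 in Ioc (-R) R, Phi p (3*t) (x1 - x3)
      = c * ∫ x3 in (-R)..R, Phi p (3*t) (x1 - x3) := by
        rw [← intervalIntegral.integral_of_le (by linarith : -R ≤ R)]
    _ ≤ c * Psi := mul_le_mul_of_nonneg_left this hcn
    _ = _ := by rw [hc]

/-- Level `x2`. -/
lemma O2 {p t R : ℝ} (hp : -1 < p) (ht : 0 < t) (hR : 0 < R) (x1 : ℝ)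
    (h1 : |x1| ≤ R) :
    (∫ x2 in (-R)..R, ∫ x3 in (-R)..R, ∫ x4 in (-R)..R,
      ∫ y1 : ℝ, ∫ y2 : ℝ, ∫ y3 : ℝ, ∫ y4 : ℝ, ∫ z1 : ℝ, ∫ z2 : ℝ,
      (if |x1 - z1| ≤ t then (1:ℝ) else 0) * (if |x2 - z2| ≤ t then (1:ℝ) else 0) *
      (if |x3 - y3| ≤ t then (1:ℝ) else 0) * (if |x4 - y4| ≤ t then (1:ℝ) else 0) *
      (if |y1 - z1| ≤ t then (1:ℝ) else 0) * (if |y2 - z2| ≤ t then (1:ℝ) else 0) *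
      (|y1 - y3| ^ p * |y2 - y4| ^ p * |z1 - z2| ^ p)) ≤
    32 * t^3 * (∫ u in (-(2*R))..(2*R), Phi p (2*t) u) *
      (∫ u in (-(2*R))..(2*R), Phi p (3*t) u) *
      (∫ u in (-(2*R))..(2*R), Phi p (3*t) u) := by
  set Psi : ℝ := ∫ u in (-(2*R))..(2*R), Phi p (3*t) u with hPsi
  have hPsin : 0 ≤ Psi := Psi_nonneg (by linarith) hR.le
  set c : ℝ := 32 * t^3 * Psi * Psi with hc
  have hcn : 0 ≤ c := mul_nonneg (mul_nonneg (by positivity) hPsin) hPsin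
  rw [intervalIntegral.integral_of_le (by linarith : -R ≤ R)]
  have key : (∫ x2 in Ioc (-R) R, ∫ x3 in (-R)..R, ∫ x4 in (-R)..R,
      ∫ y1 : ℝ, ∫ y2 : ℝ, ∫ y3 : ℝ, ∫ y4 : ℝ, ∫ z1 : ℝ, ∫ z2 : ℝ,
      (if |x1 - z1| ≤ t then (1:ℝ) else 0) * (if |x2 - z2| ≤ t then (1:ℝ) else 0) *
      (if |x3 - y3| ≤ t then (1:ℝ) else 0) * (if |x4 - y4| ≤ t then (1:ℝ) else 0) *
      (if |y1 - z1| ≤ t then (1:ℝ) else 0) * (if |y2 - z2| ≤ t then (1:ℝ) else 0) *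
      (|y1 - y3| ^ p * |y2 - y4| ^ p * |z1 - z2| ^ p)) ≤
      ∫ x2 in Ioc (-R) R, c * Phi p (2*t) (x1 - x2) := by
    apply integral_mono_of_nonneg
    · filter_upwards with x2
      apply intervalIntegral.integral_nonneg (by linarith : -R ≤ R)
      intro x3 _
      exact intervalIntegral.integral_nonneg (by linarith)
        (fun x4 _ => inner_nonneg x1 x2 x3 x4)
    · apply Continuous.integrableOn_Ioc
      exact continuous_const.mul
        ((Phi_continuous hp (2*t)).comp (continuous_const.sub continuous_id))
    · filter_upwards [ae_restrict_mem measurableSet_Ioc] with x2 hx2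
      have h2 : |x2| ≤ R := abs_le.mpr ⟨hx2.1.le, hx2.2⟩
      refine le_trans (O3 hp ht hR x1 x2 h1 h2) (le_of_eq ?_)
      rw [hc, hPsi]; ring
  refine le_trans key ?_
  rw [MeasureTheory.integral_const_mul]
  have hsh := outer_shift (s := 2*t) hp (by linarith) h1 (r := p)
  calc c * ∫ x2 in Ioc (-R) R, Phi p (2*t) (x1 - x2)
      = c * ∫ x2 in (-R)..R, Phi p (2*t) (x1 - x2) := by
        rw [← intervalIntegral.integral_of_le (by linarith : -R ≤ R)]
    _ ≤ c * ∫ u in (-(2*R))..(2*R), Phi p (2*t) u := mul_le_mul_of_nonneg_left hsh hcn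
    _ = _ := by rw [hc, hPsi]; ring

/-- Level `x1`. -/
lemma O1 {p t R : ℝ} (hp : -1 < p) (ht : 0 < t) (hR : 0 < R) :
    (∫ x1 in (-R)..R, ∫ x2 in (-R)..R, ∫ x3 in (-R)..R, ∫ x4 in (-R)..R,
      ∫ y1 : ℝ, ∫ y2 : ℝ, ∫ y3 : ℝ, ∫ y4 : ℝ, ∫ z1 : ℝ, ∫ z2 : ℝ,
      (if |x1 - z1| ≤ t then (1:ℝ) else 0) * (if |x2 - z2| ≤ t then (1:ℝ) else 0) *
      (if |x3 - y3| ≤ t then (1:ℝ) else 0) * (if |x4 - y4| ≤ t then (1:ℝ) else 0) *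
      (if |y1 - z1| ≤ t then (1:ℝ) else 0) * (if |y2 - z2| ≤ t then (1:ℝ) else 0) *
      (|y1 - y3| ^ p * |y2 - y4| ^ p * |z1 - z2| ^ p)) ≤
    2 * R * (32 * t^3 * ((∫ u in (-(2*R))..(2*R), Phi p (2*t) u) *
      (∫ u in (-(2*R))..(2*R), Phi p (3*t) u) *
      (∫ u in (-(2*R))..(2*R), Phi p (3*t) u))) := by
  set c : ℝ := 32 * t^3 * ((∫ u in (-(2*R))..(2*R), Phi p (2*t) u) *
      (∫ u in (-(2*R))..(2*R), Phi p (3*t) u) *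
      (∫ u in (-(2*R))..(2*R), Phi p (3*t) u)) with hc
  rw [intervalIntegral.integral_of_le (by linarith : -R ≤ R)]
  have key : (∫ x1 in Ioc (-R) R, ∫ x2 in (-R)..R, ∫ x3 in (-R)..R, ∫ x4 in (-R)..R,
      ∫ y1 : ℝ, ∫ y2 : ℝ, ∫ y3 : ℝ, ∫ y4 : ℝ, ∫ z1 : ℝ, ∫ z2 : ℝ,
      (if |x1 - z1| ≤ t then (1:ℝ) else 0) * (if |x2 - z2| ≤ t then (1:ℝ) else 0) *
      (if |x3 - y3| ≤ t then (1:ℝ) else 0) * (if |x4 - y4| ≤ t then (1:ℝ) else 0) *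
      (if |y1 - z1| ≤ t then (1:ℝ) else 0) * (if |y2 - z2| ≤ t then (1:ℝ) else 0) *
      (|y1 - y3| ^ p * |y2 - y4| ^ p * |z1 - z2| ^ p)) ≤
      ∫ _x1 in Ioc (-R) R, c := by
    apply integral_mono_of_nonneg
    · filter_upwards with x1
      apply intervalIntegral.integral_nonneg (by linarith : -R ≤ R)
      intro x2 _
      apply intervalIntegral.integral_nonneg (by linarith : -R ≤ R)
      intro x3 _
      exact intervalIntegral.integral_nonneg (by linarith)
        (fun x4 _ => inner_nonneg x1 x2 x3 x4)
    · exact integrableOn_const measure_Ioc_lt_top.ne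
    · filter_upwards [ae_restrict_mem measurableSet_Ioc] with x1 hx1
      have h1 : |x1| ≤ R := abs_le.mpr ⟨hx1.1.le, hx1.2⟩
      refine le_trans (O2 hp ht hR x1 h1) (le_of_eq ?_)
      rw [hc]; ring
  refine le_trans key (le_of_eq ?_)
  rw [setIntegral_const, Real.volume_real_Ioc_of_le (by linarith : -R ≤ R), smul_eq_mul]
  ring

end Stmt13

open Stmt13 in
/-- The bound on the ten-fold integral `𝐈` from the proof of Theorem 1.1 (case
`H > 1/2`): for `H ∈ (1/2,1)` and `t > 0` there are `C > 0`, `R₀ > 0` such that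
for all `R ≥ R₀` the integral over `[-R,R]⁴ × ℝ⁶` of the product of indicators
and kernels is at most `C R^{6H-2}`. -/
theorem stmt_13 (H : ℝ) (hH : H ∈ Set.Ioo (1/2 : ℝ) 1) (t : ℝ) (ht : 0 < t) :
    ∃ C > (0:ℝ), ∃ R₀ > (0:ℝ), ∀ R ≥ R₀,
      (∫ x1 in (-R)..R, ∫ x2 in (-R)..R, ∫ x3 in (-R)..R, ∫ x4 in (-R)..R,
        ∫ y1 : ℝ, ∫ y2 : ℝ, ∫ y3 : ℝ, ∫ y4 : ℝ, ∫ z1 : ℝ, ∫ z2 : ℝ,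
          (if |x1 - z1| ≤ t then (1:ℝ) else 0) * (if |x2 - z2| ≤ t then (1:ℝ) else 0) *
          (if |x3 - y3| ≤ t then (1:ℝ) else 0) * (if |x4 - y4| ≤ t then (1:ℝ) else 0) *
          (if |y1 - z1| ≤ t then (1:ℝ) else 0) * (if |y2 - z2| ≤ t then (1:ℝ) else 0) *
          (|y1 - y3| ^ (2 * H - 2) * |y2 - y4| ^ (2 * H - 2) * |z1 - z2| ^ (2 * H - 2)))
        ≤ C * R ^ (6 * H - 2) := by
  obtain ⟨hH1, hH2⟩ := hH
  have hp : (-1:ℝ) < 2 * H - 2 := by linarith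
  set e : ℝ := 2 * H - 2 + 1 with hee
  have he : 0 < e := by rw [hee]; linarith
  refine ⟨73728 * t^6 / e^3 * 3 ^ (e + e + e), ?_, 3*t, by linarith, ?_⟩
  · apply mul_pos (div_pos (by positivity) (pow_pos he 3))
    exact Real.rpow_pos_of_pos (by norm_num) _
  intro R hR
  have hR0 : 0 < R := lt_of_lt_of_le (by linarith) hR
  have h3R : (0:ℝ) < 3 * R := by linarith
  have hA0 : 0 ≤ (3*R) ^ e := Real.rpow_nonneg (by linarith) e
  set Psi2 : ℝ := ∫ u in (-(2*R))..(2*R), Phi (2 * H - 2) (2*t) u with hP2def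
  set Psi3 : ℝ := ∫ u in (-(2*R))..(2*R), Phi (2 * H - 2) (3*t) u with hP3def
  have hP2n : 0 ≤ Psi2 := Psi_nonneg (by linarith) hR0.le
  have hP3n : 0 ≤ Psi3 := Psi_nonneg (by linarith) hR0.le
  have h2 : Psi2 ≤ 4*(2*t)*(3*R) ^ e / e :=
    psi_bound hp (by linarith) (by linarith)
  have h3 : Psi3 ≤ 4*(3*t)*(3*R) ^ e / e :=
    psi_bound hp (by linarith) (by linarith)
  have hq2 : (0:ℝ) ≤ 4*(2*t)*(3*R) ^ e / e :=
    div_nonneg (mul_nonneg (by linarith) hA0) he.le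
  have hq3 : (0:ℝ) ≤ 4*(3*t)*(3*R) ^ e / e :=
    div_nonneg (mul_nonneg (by linarith) hA0) he.le
  have m1 : Psi2 * Psi3 * Psi3 ≤
      (4*(2*t)*(3*R) ^ e / e) * (4*(3*t)*(3*R) ^ e / e) * (4*(3*t)*(3*R) ^ e / e) :=
    mul_le_mul (mul_le_mul h2 h3 hP3n hq2) h3 hP3n (mul_nonneg hq2 hq3)
  refine le_trans (O1 hp ht hR0) ?_
  calc 2 * R * (32 * t^3 * (Psi2 * Psi3 * Psi3))
      ≤ 2 * R * (32 * t^3 * ((4*(2*t)*(3*R) ^ e / e) * (4*(3*t)*(3*R) ^ e / e) *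
          (4*(3*t)*(3*R) ^ e / e))) := by
        apply mul_le_mul_of_nonneg_left ?_ (by linarith : (0:ℝ) ≤ 2 * R)
        apply mul_le_mul_of_nonneg_left m1 (by positivity)
    _ = 73728 * t^6 / e^3 * (R * ((3*R) ^ e * (3*R) ^ e * (3*R) ^ e)) := by
        field_simp
        ring
    _ = 73728 * t^6 / e^3 * (R * (3*R) ^ (e + e + e)) := by
        rw [← Real.rpow_add h3R, ← Real.rpow_add h3R]
    _ = 73728 * t^6 / e^3 * (R * ((3:ℝ) ^ (e+e+e) * R ^ (e+e+e))) := by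
        rw [Real.mul_rpow (by norm_num) hR0.le]
    _ = 73728 * t^6 / e^3 * 3 ^ (e+e+e) * (R ^ (1:ℝ) * R ^ (e+e+e)) := by
        rw [Real.rpow_one]; ring
    _ = 73728 * t^6 / e^3 * 3 ^ (e+e+e) * R ^ (6 * H - 2) := by
        have hexp : (1:ℝ) + (e+e+e) = 6*H - 2 := by rw [hee]; ring
        rw [← Real.rpow_add hR0, hexp]
end
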